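/- arXiv:2401.10546 — 5 statements merged into one kernel-verified Lean document; each statement's English description precedes it below -/
import Mathlib

section
/- There exists θ₀ ∈ (π/2, π) such that for every θ ∈ (π/2, θ₀) there are constants c₁, c₂ > 0, independent of τ and z, with the property: for every time step τ > 0 and every z ∈ D(τ,θ) one has c₁|z| ≤ |δ_τ(e^{−zτ})| ≤ c₂|z|, where δ_τ is the BDF2 generating symbol. -/
open Complex Set

/-- The BDF2 generating symbol `δ_τ(ξ) = τ⁻¹(3/2 − 2ξ + ξ²/2)`. -/
noncomputable def bdf2 (τ : ℝ) (ξ : ℂ) : ℂ :=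
  (τ : ℂ)⁻¹ * (3 / 2 - 2 * ξ + ξ ^ 2 / 2)

/-- The region `D(τ,θ)`: nonzero `z` with either `|arg z| = θ` and `|Im z| ≤ π/τ`,
or `|z| ≤ 1/τ` and `|arg z| ≤ θ`. -/
def Dset (τ θ : ℝ) : Set ℂ :=
  {z : ℂ | z ≠ 0 ∧
    ((|z.arg| = θ ∧ |z.im| ≤ Real.pi / τ) ∨ (‖z‖ ≤ 1 / τ ∧ |z.arg| ≤ θ))}

private lemma exp_four_le : Real.exp 4 ≤ 55 := by
  have h : Real.exp 4 = Real.exp 1 ^ 4 := by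
    rw [← Real.exp_nat_mul]; norm_num
  have h1 : Real.exp 1 ≤ 68/25 := by nlinarith [Real.exp_one_lt_d9]
  have h2 := pow_le_pow_left₀ (Real.exp_pos 1).le h1 4
  rw [h]; nlinarith [h2]

private lemma core_real (a b : ℝ) (h1 : -(16/5) ≤ a) (h2 : a ≤ 1/3) (h3 : |b| ≤ Real.pi) :
    (a ^ 2 + b ^ 2) / 225 ≤ (Real.exp a - 1) ^ 2 + 2 * Real.exp a * (1 - Real.cos b) := by
  have hA : a ^ 2 / 200 ≤ (Real.exp a - 1) ^ 2 := by
    rcases le_or_gt 0 a with h | h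
    · nlinarith [Real.add_one_le_exp a]
    · have e1 : 1 - a ≤ Real.exp (-a) := by have := Real.add_one_le_exp (-a); linarith
      have e3 : (0:ℝ) < Real.exp a := Real.exp_pos a
      have e2 : Real.exp a * Real.exp (-a) = 1 := by rw [← Real.exp_add]; simp
      have e4 : Real.exp a * (1 - a) ≤ 1 := by nlinarith
      have h1a : (0:ℝ) < 1 - a := by linarith
      have e4' : Real.exp a ≤ 1 / (1 - a) := (le_div_iff₀ h1a).2 e4
      have e4'' : 1 - 1 / (1 - a) = -a / (1 - a) := by field_simp; ring
      have e4''' : -a / (21/5) ≤ -a / (1 - a) :=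
        div_le_div_of_nonneg_left (by linarith) h1a (by linarith)
      have e5 : -a / (21/5) ≤ 1 - Real.exp a := by linarith
      have e6 : (0:ℝ) ≤ -a / (21/5) := by linarith
      have e7 := mul_le_mul e5 e5 e6 (by linarith)
      nlinarith [e7]
  have hea : (1:ℝ)/55 ≤ Real.exp a := by
    have h4 : Real.exp (-a) ≤ Real.exp 4 := Real.exp_le_exp.2 (by linarith)
    have e2 : Real.exp a * Real.exp (-a) = 1 := by rw [← Real.exp_add]; simp
    nlinarith [exp_four_le, Real.exp_pos (-a), Real.exp_pos a]
  have hB : b ^ 2 / 200 ≤ 2 * Real.exp a * (1 - Real.cos b) := by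
    have hcos := Real.cos_le_one_sub_mul_cos_sq h3
    have hp1 : (3:ℝ) < Real.pi := Real.pi_gt_three
    have hp2 : Real.pi < 63/20 := by have h := Real.pi_lt_d2; norm_num at h ⊢; linarith
    have hpi2 : Real.pi ^ 2 ≤ 10 := by nlinarith
    have hfrac : (1:ℝ)/5 * b ^ 2 ≤ 2 / Real.pi ^ 2 * b ^ 2 := by
      have h5 : (1:ℝ)/5 ≤ 2 / Real.pi ^ 2 := by
        rw [div_le_div_iff₀ (by norm_num) (by positivity)]; nlinarith
      nlinarith [sq_nonneg b]
    have hc1 : (1:ℝ)/5 * b ^ 2 ≤ 1 - Real.cos b := by linarith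
    nlinarith [hea, hc1, sq_nonneg b, Real.cos_le_one b]
  linarith [hA, hB, sq_nonneg a, sq_nonneg b]

/-- Lower bound `|e^u - 1| ≥ |u|/15` on the relevant region. -/
private lemma exp_sub_one_lower {u : ℂ} (h1 : -(16/5) ≤ u.re) (h2 : u.re ≤ 1/3)
    (h3 : |u.im| ≤ Real.pi) :
    ‖u‖ / 15 ≤ ‖Complex.exp u - 1‖ := by
  have hsq : ‖Complex.exp u - 1‖ ^ 2
      = (Real.exp u.re - 1) ^ 2 + 2 * Real.exp u.re * (1 - Real.cos u.im) := by
    rw [Complex.sq_norm, Complex.normSq_apply]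
    simp only [Complex.sub_re, Complex.sub_im, Complex.exp_re, Complex.exp_im,
      Complex.one_re, Complex.one_im]
    linear_combination (Real.exp u.re) ^ 2 * (Real.sin_sq_add_cos_sq u.im)
  have habs2 : ‖u‖ ^ 2 = u.re ^ 2 + u.im ^ 2 := by
    rw [Complex.sq_norm, Complex.normSq_apply]; ring
  have hcore := core_real u.re u.im h1 h2 h3
  nlinarith [hsq, habs2, hcore, norm_nonneg u, norm_nonneg (Complex.exp u - 1)]

private lemma inv_half_div (x τ : ℝ) (_hτ : 0 < τ) : τ⁻¹ * (x / 2) = x / (2 * τ) := by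
  rw [inv_mul_eq_div, div_div]

set_option maxHeartbeats 1000000 in
theorem bdf2_symbol_two_sided_bound :
    ∃ θ₀ ∈ Ioo (Real.pi / 2) Real.pi, ∀ θ ∈ Ioo (Real.pi / 2) θ₀,
      ∃ c₁ > (0 : ℝ), ∃ c₂ > (0 : ℝ),
        ∀ τ : ℝ, 0 < τ → ∀ z ∈ Dset τ θ,
          c₁ * ‖z‖ ≤ ‖bdf2 τ (Complex.exp (-z * τ))‖ ∧
          ‖bdf2 τ (Complex.exp (-z * τ))‖ ≤ c₂ * ‖z‖ := by
  have hpi3 : (3:ℝ) < Real.pi := Real.pi_gt_three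
  have hpi315 : Real.pi < 63/20 := by have h := Real.pi_lt_d2; norm_num at h ⊢; linarith
  refine ⟨Real.pi/2 + 1/10, ⟨by linarith, by linarith⟩, ?_⟩
  intro θ hθ
  obtain ⟨hθ1, hθ2⟩ := hθ
  refine ⟨1/120, by norm_num, 2000, by norm_num, ?_⟩
  intro τ hτ z hz
  obtain ⟨hz0, hcase⟩ := hz
  have hτC : (τ:ℂ) ≠ 0 := by exact_mod_cast hτ.ne'
  obtain ⟨w, hwdef⟩ : ∃ w : ℂ, w = z * τ := ⟨_, rfl⟩
  have hw0 : w ≠ 0 := hwdef ▸ mul_ne_zero hz0 hτC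
  have hwabs : ‖w‖ = ‖z‖ * τ := by
    rw [hwdef, norm_mul, Complex.norm_real, Real.norm_eq_abs, _root_.abs_of_pos hτ]
  have hwarg : w.arg = z.arg := hwdef ▸ Complex.arg_mul_real hτ z
  have hwim : w.im = z.im * τ := by
    rw [hwdef]; simp [Complex.mul_im]
  have hargle : |w.arg| ≤ θ := by
    rw [hwarg]; rcases hcase with ⟨h1, _⟩ | ⟨_, h2⟩
    · exact h1.le
    · exact h2
  have key : |w.im| ≤ Real.pi ∧ ‖w‖ ≤ 16/5 := by
    rcases hcase with ⟨h1, h2⟩ | ⟨h1, h2⟩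
    · have him : |w.im| ≤ Real.pi := by
        rw [hwim, abs_mul, _root_.abs_of_pos hτ]
        calc |z.im| * τ ≤ (Real.pi / τ) * τ := mul_le_mul_of_nonneg_right h2 hτ.le
          _ = Real.pi := by field_simp
      refine ⟨him, ?_⟩
      have hsinθ : (99/100:ℝ) ≤ Real.sin θ := by
        have hcc := Real.one_sub_sq_div_two_le_cos (x := Real.pi/2 - θ)
        rw [Real.cos_pi_div_two_sub] at hcc
        nlinarith [hcc, mul_nonneg (by linarith : (0:ℝ) ≤ θ - Real.pi/2)
          (by linarith : (0:ℝ) ≤ Real.pi/2 + 1/10 - θ)]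
      have hs := Complex.sin_arg w
      have habs0 : (0:ℝ) < ‖w‖ := norm_pos_iff.mpr hw0
      have hsim : |w.im| = |Real.sin w.arg| * ‖w‖ := by
        rw [hs, abs_div, _root_.abs_of_pos habs0, div_mul_cancel₀]
        exact habs0.ne'
      have hsa : |Real.sin w.arg| = Real.sin θ := by
        rw [hwarg]
        rcases (abs_eq (by linarith : (0:ℝ) ≤ θ)).1 h1 with h | h
        · rw [h, _root_.abs_of_nonneg (by linarith)]
        · rw [h, Real.sin_neg, abs_neg, _root_.abs_of_nonneg (by linarith)]
      rw [hsa] at hsim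
      have hle : Real.sin θ * ‖w‖ ≤ Real.pi := by rw [← hsim]; exact him
      nlinarith [mul_nonneg (by linarith : (0:ℝ) ≤ Real.sin θ - 99/100) habs0.le]
    · have habs : ‖w‖ ≤ 1 := by
        rw [hwabs]
        calc ‖z‖ * τ ≤ (1/τ) * τ := mul_le_mul_of_nonneg_right h1 hτ.le
          _ = 1 := by field_simp
      constructor
      · have := (Complex.abs_im_le_norm w).trans habs
        linarith
      · linarith
  obtain ⟨him, habs⟩ := key
  have hre : -(‖w‖) / 10 ≤ w.re := by
    have hc := Complex.cos_arg hw0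
    have hcosθ : -(1/10 : ℝ) ≤ Real.cos θ := by
      have h1 : Real.cos θ = Real.sin (Real.pi/2 - θ) := (Real.sin_pi_div_two_sub θ).symm
      have h2 : |Real.sin (Real.pi/2 - θ)| ≤ |Real.pi/2 - θ| := Real.abs_sin_le_abs
      have h3 : |Real.pi/2 - θ| ≤ 1/10 := by
        rw [abs_le]; constructor <;> linarith
      have h4 := abs_le.1 (h2.trans h3)
      rw [h1]; linarith [h4.1]
    have hcosarg : Real.cos θ ≤ Real.cos w.arg := by
      rw [← Real.cos_abs w.arg]
      exact Real.cos_le_cos_of_nonneg_of_le_pi (abs_nonneg _) (by linarith) hargle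
    have habs0 : (0:ℝ) < ‖w‖ := norm_pos_iff.mpr hw0
    have hr : w.re = Real.cos w.arg * ‖w‖ := by
      rw [hc, div_mul_cancel₀]; exact habs0.ne'
    rw [hr]
    nlinarith [mul_nonneg (by linarith : (0:ℝ) ≤ Real.cos w.arg + 1/10) habs0.le]
  obtain ⟨u, hudef⟩ : ∃ u : ℂ, u = -w := ⟨_, rfl⟩
  have hure : u.re = -w.re := by rw [hudef]; simp
  have huim : u.im = -w.im := by rw [hudef]; simp
  have huabs : ‖u‖ = ‖w‖ := by rw [hudef, norm_neg]
  have hure1 : -(16/5) ≤ u.re := by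
    rw [hure]; have := Complex.re_le_norm w; linarith
  have hure2 : u.re ≤ 1/3 := by rw [hure]; linarith
  have huim1 : |u.im| ≤ Real.pi := by rw [huim, abs_neg]; exact him
  have hexpu : Complex.exp (-z * τ) = Complex.exp u := by
    rw [hudef, hwdef]; congr 1; ring
  have hfac : bdf2 τ (Complex.exp (-z * τ))
      = (τ:ℂ)⁻¹ * ((Complex.exp u - 1) * (Complex.exp u - 3) / 2) := by
    rw [hexpu]; unfold bdf2; ring
  obtain ⟨A, hAdef⟩ : ∃ A : ℝ, A = ‖Complex.exp u - 1‖ := ⟨_, rfl⟩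
  obtain ⟨B, hBdef⟩ : ∃ B : ℝ, B = ‖Complex.exp u - 3‖ := ⟨_, rfl⟩
  have habsfac : ‖bdf2 τ (Complex.exp (-z * τ))‖ = (A * B) / (2 * τ) := by
    rw [hfac, norm_mul, norm_inv, Complex.norm_real, Real.norm_eq_abs, _root_.abs_of_pos hτ, norm_div,
      norm_mul, ← hAdef, ← hBdef, show ‖(2:ℂ)‖ = 2 by norm_num]
    exact inv_half_div (A * B) τ hτ
  have hexpabs : ‖Complex.exp u‖ ≤ 55 := by
    rw [Complex.norm_exp]
    have h4 : u.re ≤ 4 := by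
      rw [hure]
      have := abs_le.1 (Complex.abs_re_le_norm w)
      linarith [this.1]
    exact (Real.exp_le_exp.2 h4).trans exp_four_le
  have hBlow : (1/4 : ℝ) ≤ B := by
    have h1 : Real.exp u.re ≤ Real.exp 1 := Real.exp_le_exp.2 (by linarith)
    have h2 : Real.exp 1 ≤ 68/25 := by nlinarith [Real.exp_one_lt_d9]
    have h3 : ‖Complex.exp u‖ ≤ 68/25 := by
      rw [Complex.norm_exp]; linarith
    have h6 := norm_sub_norm_le (3:ℂ) (Complex.exp u)
    rw [show ‖(3:ℂ)‖ = 3 by norm_num] at h6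
    rw [show (3:ℂ) - Complex.exp u = -(Complex.exp u - 3) by ring, norm_neg,
      ← hBdef] at h6
    linarith
  have hBhigh : B ≤ 58 := by
    have h6 := norm_sub_le (Complex.exp u) (3:ℂ)
    rw [show ‖(3:ℂ)‖ = 3 by norm_num, ← hBdef] at h6
    linarith
  have hAlow : ‖w‖ / 15 ≤ A := by
    rw [hAdef, ← huabs]
    exact exp_sub_one_lower hure1 hure2 huim1
  have habs0 : (0:ℝ) ≤ ‖w‖ := norm_nonneg w
  have hAhigh : A ≤ 56 * ‖w‖ := by
    rcases le_or_gt (‖w‖) 1 with h | h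
    · have h7 := Complex.norm_exp_sub_one_le (x := u) (by rw [huabs]; exact h)
      rw [huabs, ← hAdef] at h7
      linarith
    · have h8 : A ≤ 56 := by
        have h6 := norm_sub_le (Complex.exp u) (1:ℂ)
        rw [show ‖(1:ℂ)‖ = 1 by norm_num, ← hAdef] at h6
        linarith
      have h9 : (56:ℝ) * 1 ≤ 56 * ‖w‖ := by
        apply mul_le_mul_of_nonneg_left h.le (by norm_num)
      linarith
  have hA0 : (0:ℝ) ≤ A := hAdef ▸ norm_nonneg _
  have hB0 : (0:ℝ) ≤ B := hBdef ▸ norm_nonneg _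
  have hzabs : ‖z‖ = ‖w‖ / τ := by
    rw [hwabs]; field_simp
  have key1 : ‖w‖ / 60 ≤ A * B := by
    nlinarith [mul_le_mul hAlow hBlow (by norm_num) hA0]
  have key2 : A * B ≤ 4000 * ‖w‖ := by
    nlinarith [mul_le_mul hAhigh hBhigh hB0 (by positivity : (0:ℝ) ≤ 56 * ‖w‖)]
  rw [habsfac, hzabs]
  constructor
  · calc 1/120 * (‖w‖ / τ) = (‖w‖ / 60) / (2 * τ) := by ring
      _ ≤ (A * B) / (2 * τ) := by gcongr
  · calc (A * B) / (2 * τ) ≤ (4000 * ‖w‖) / (2 * τ) := by gcongr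
      _ = 2000 * (‖w‖ / τ) := by ring
end

section
/- There exists θ₀ ∈ (π/2, π) such that for every θ ∈ (π/2, θ₀) there is a constant c > 0, independent of τ and z, with the property: for every time step τ > 0 and every z ∈ D(τ,θ) one has |δ_τ(e^{−zτ}) − z| ≤ c τ² |z|³, where δ_τ is the BDF2 generating symbol. -/
open Complex Set

lemma small_bound (w : ℂ) (hw : ‖w‖ ≤ 1) :
    ‖3/2 - 2*Complex.exp (-w) + (Complex.exp (-w))^2/2 - w‖ ≤
      2 * ‖w‖ ^ 3 := by
  have hb := Complex.exp_bound (x := -w) (by simpa using hw) (n := 3) (by norm_num)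
  have hsum : (∑ i ∈ Finset.range 3, (-w)^i / (Nat.factorial i : ℂ)) = 1 - w + w^2/2 := by
    simp [Finset.sum_range_succ, Nat.factorial]
    ring
  rw [hsum] at hb
  set h : ℂ := Complex.exp (-w) - (1 - w + w^2/2) with hdef
  have hh : ‖h‖ ≤ ‖w‖ ^ 3 * (2/9) :=
    hb.trans_eq (by rw [norm_neg]; norm_num [Nat.factorial])
  have hid : 3/2 - 2*Complex.exp (-w) + (Complex.exp (-w))^2/2 - w
      = -(w^3)/2 + w^4/8 + h*(-1 - w + w^2/2) + h^2/2 := by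
    have hE : Complex.exp (-w) = h + (1 - w + w^2/2) := by rw [hdef]; ring
    rw [hE]; ring
  rw [hid]
  have t1 : ‖-(w^3)/2 + w^4/8 + h*(-1 - w + w^2/2) + h^2/2‖ ≤
      ‖-(w^3)/2‖ + ‖w^4/8‖ +
      ‖h*(-1 - w + w^2/2)‖ + ‖h^2/2‖ :=
    (norm_add_le _ _).trans (add_le_add_left ((norm_add_le _ _).trans
      (add_le_add_left (norm_add_le _ _) _)) _)
  have e1 : ‖-(w^3)/2‖ = ‖w‖ ^ 3 / 2 := by
    simp [norm_div, norm_pow]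
  have e2 : ‖w^4/8‖ = ‖w‖ ^ 4 / 8 := by
    simp [norm_div, norm_pow]
  have e4 : ‖h^2/2‖ = ‖h‖ ^ 2 / 2 := by
    simp [norm_div, norm_pow]
  have e3 : ‖h*(-1 - w + w^2/2)‖ ≤ ‖h‖ * (1 + ‖w‖ + ‖w‖ ^2/2) := by
    rw [norm_mul]
    have : ‖-1 - w + w^2/2‖ ≤ 1 + ‖w‖ + ‖w‖ ^2/2 := by
      have : (-1 - w + w^2/2 : ℂ) = (-1) + (-w) + w^2/2 := by ring
      rw [this]
      refine (norm_add_le _ _).trans ?_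
      have := norm_add_le (-1 : ℂ) (-w)
      simp [norm_div, norm_pow] at this ⊢
      linarith
    exact mul_le_mul_of_nonneg_left this (norm_nonneg h)
  have hw0 : 0 ≤ ‖w‖ := norm_nonneg w
  have hh0 : 0 ≤ ‖h‖ := norm_nonneg h
  calc ‖-(w^3)/2 + w^4/8 + h*(-1 - w + w^2/2) + h^2/2‖
      ≤ ‖-(w^3)/2‖ + ‖w^4/8‖ +
        ‖h*(-1 - w + w^2/2)‖ + ‖h^2/2‖ := t1
    _ ≤ 2 * ‖w‖ ^ 3 := by
        rw [e1, e2, e4]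
        nlinarith [e3, pow_le_one₀ hw0 hw (n := 3), pow_le_one₀ hw0 hw (n := 2),
          mul_le_mul hh hh hh0 (by positivity)]

lemma big_bound (w : ℂ) (h1 : 1 ≤ ‖w‖) (h2 : |w.re| ≤ 1) :
    ‖3/2 - 2*Complex.exp (-w) + (Complex.exp (-w))^2/2 - w‖ ≤
      15 * ‖w‖ ^ 3 := by
  have hE : ‖Complex.exp (-w)‖ ≤ 3 := by
    rw [Complex.norm_exp]
    have hre : (-w).re ≤ 1 := by
      simp only [Complex.neg_re]
      linarith [(abs_le.mp h2).1]
    calc Real.exp (-w).re ≤ Real.exp 1 := Real.exp_le_exp.mpr hre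
      _ ≤ 3 := by linarith [Real.exp_one_lt_d9]
  have t1 : ‖3/2 - 2*Complex.exp (-w) + (Complex.exp (-w))^2/2 - w‖ ≤
      ‖(3/2 : ℂ)‖ + ‖2*Complex.exp (-w)‖ +
      ‖(Complex.exp (-w))^2/2‖ + ‖w‖ := by
    have : (3/2 - 2*Complex.exp (-w) + (Complex.exp (-w))^2/2 - w : ℂ)
        = 3/2 + (-(2*Complex.exp (-w))) + (Complex.exp (-w))^2/2 + (-w) := by ring
    rw [this]
    refine (norm_add_le _ _).trans ?_
    rw [norm_neg]
    refine add_le_add_left ((norm_add_le _ _).trans (add_le_add_left ?_ _)) _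
    exact (norm_add_le _ _).trans_eq (by rw [norm_neg])
  have e1 : ‖(3/2 : ℂ)‖ = 3/2 := by
    rw [norm_div]; norm_num
  have e2 : ‖2*Complex.exp (-w)‖ ≤ 6 := by
    rw [norm_mul]
    simpa using by linarith
  have e3 : ‖(Complex.exp (-w))^2/2‖ ≤ 9/2 := by
    rw [norm_div, norm_pow]
    have := norm_nonneg (Complex.exp (-w))
    simp only [Complex.norm_two]
    nlinarith
  have hcube : ‖w‖ ≤ ‖w‖ ^ 3 := le_self_pow₀ h1 (by norm_num)
  have h1' : (1:ℝ) ≤ ‖w‖ ^ 3 := one_le_pow₀ h1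
  linarith


theorem bdf2_symbol_consistency :
    ∃ θ₀ ∈ Ioo (Real.pi / 2) Real.pi, ∀ θ ∈ Ioo (Real.pi / 2) θ₀,
      ∃ c > (0 : ℝ),
        ∀ τ : ℝ, 0 < τ → ∀ z ∈ Dset τ θ,
          ‖bdf2 τ (Complex.exp (-z * τ)) - z‖ ≤
            c * τ ^ 2 * ‖z‖ ^ 3 := by
  have hπ := Real.pi_pos
  have hat : 0 < Real.arctan (Real.pi)⁻¹ := by rw [← Real.arctan_zero]; exact Real.arctan_strictMono (by positivity)
  have hat2 : Real.arctan (Real.pi)⁻¹ < Real.pi / 2 := Real.arctan_lt_pi_div_two _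
  refine ⟨Real.pi/2 + Real.arctan (Real.pi)⁻¹, ⟨by linarith, by linarith⟩, ?_⟩
  intro θ hθ
  refine ⟨15, by norm_num, ?_⟩
  intro τ hτ z hz
  obtain ⟨hz0, hcase⟩ := hz
  set w : ℂ := z * (τ : ℂ) with hw_def
  have hθ1 : Real.pi / 2 < θ := hθ.1
  have hθ2 : θ < Real.pi / 2 + Real.arctan (Real.pi)⁻¹ := hθ.2
  have hθπ : θ < Real.pi := by linarith
  have habsw : ‖w‖ = ‖z‖ * τ := by
    rw [hw_def, norm_mul, Complex.norm_real, Real.norm_eq_abs, abs_of_pos hτ]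
  -- main estimate on |f(w)|
  have key : ‖3/2 - 2*Complex.exp (-w) + (Complex.exp (-w))^2/2 - w‖ ≤
      15 * ‖w‖ ^ 3 := by
    rcases le_or_gt (‖w‖) 1 with hsmall | hbig
    · have := small_bound w hsmall
      have h3 : 0 ≤ ‖w‖ ^ 3 := by positivity
      linarith
    · -- then |z| > 1/τ, so we are on the ray
      have hzbig : ¬ (‖z‖ ≤ 1 / τ) := by
        intro hle
        have : ‖w‖ ≤ 1 := by
          rw [habsw]
          calc ‖z‖ * τ ≤ (1/τ) * τ := by
                exact mul_le_mul_of_nonneg_right hle hτ.le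
            _ = 1 := by field_simp
        linarith
      rcases hcase with ⟨harg, him⟩ | ⟨hle, _⟩
      swap
      · exact absurd hle hzbig
      -- ray case: |arg z| = θ, |im z| ≤ π/τ
      have hsθ : 0 < Real.sin θ := Real.sin_pos_of_pos_of_lt_pi (by linarith) hθπ
      have hcθ : Real.cos θ < 0 := Real.cos_neg_of_pi_div_two_lt_of_lt hθ1 (by linarith)
      -- tan(θ - π/2) < π⁻¹
      have htan : Real.tan (θ - Real.pi/2) < (Real.pi)⁻¹ := by
        have h := Real.tan_lt_tan_of_lt_of_lt_pi_div_two
          (x := θ - Real.pi/2) (y := Real.arctan (Real.pi)⁻¹)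
          (by linarith) hat2 (by linarith)
        rwa [Real.tan_arctan] at h
      have htan' : -Real.cos θ < Real.sin θ * (Real.pi)⁻¹ := by
        rw [Real.tan_eq_sin_div_cos, Real.sin_sub_pi_div_two, Real.cos_sub_pi_div_two] at htan
        calc -Real.cos θ = (-Real.cos θ / Real.sin θ) * Real.sin θ := by field_simp
          _ < (Real.pi)⁻¹ * Real.sin θ := by
              exact mul_lt_mul_of_pos_right htan hsθ
          _ = Real.sin θ * (Real.pi)⁻¹ := by ring
      -- |z.re| ≤ 1/τ
      have hcosarg : Real.cos z.arg = Real.cos θ := by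
        rw [← Real.cos_abs, harg]
      have hre : z.re = ‖z‖ * Real.cos θ := by
        rw [← hcosarg, Complex.norm_mul_cos_arg]
      have him' : |z.im| = ‖z‖ * Real.sin θ := by
        have : z.im = ‖z‖ * Real.sin z.arg := (Complex.norm_mul_sin_arg z).symm
        rw [this, abs_mul, _root_.abs_of_nonneg (norm_nonneg z)]
        congr 1
        rcases abs_eq (by linarith : (0:ℝ) ≤ θ) |>.mp harg with h | h
        · rw [h, abs_of_pos hsθ]
        · rw [h, Real.sin_neg, abs_neg, abs_of_pos hsθ]
      have hrebound : |z.re| ≤ 1 / τ := by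
        have habsz : 0 ≤ ‖z‖ := norm_nonneg z
        have : |z.re| = ‖z‖ * (-Real.cos θ) := by
          rw [hre, abs_mul, _root_.abs_of_nonneg habsz, abs_of_neg hcθ]
        rw [this]
        calc ‖z‖ * (-Real.cos θ) ≤ ‖z‖ * (Real.sin θ * (Real.pi)⁻¹) :=
              mul_le_mul_of_nonneg_left htan'.le habsz
          _ = |z.im| * (Real.pi)⁻¹ := by rw [him']; ring
          _ ≤ (Real.pi / τ) * (Real.pi)⁻¹ := by
              exact mul_le_mul_of_nonneg_right him (by positivity)
          _ = 1 / τ := by field_simp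
      have hwre : |w.re| ≤ 1 := by
        have : w.re = z.re * τ := by
          rw [hw_def]; simp [Complex.mul_re]
        rw [this, abs_mul, abs_of_pos hτ]
        calc |z.re| * τ ≤ (1/τ) * τ := mul_le_mul_of_nonneg_right hrebound hτ.le
          _ = 1 := by field_simp
      exact big_bound w hbig.le hwre
  -- algebra: bdf2 τ (exp (-zτ)) - z = τ⁻¹ * f(w)
  have hτ0 : (τ : ℂ) ≠ 0 := by exact_mod_cast hτ.ne'
  have heq : bdf2 τ (Complex.exp (-z * τ)) - z =
      (τ : ℂ)⁻¹ * (3/2 - 2*Complex.exp (-w) + (Complex.exp (-w))^2/2 - w) := by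
    have hexp : (-z * (τ:ℂ)) = -w := by rw [hw_def]; ring
    rw [hexp]
    unfold bdf2
    rw [hw_def]
    field_simp
  rw [heq, norm_mul, norm_inv, Complex.norm_real, Real.norm_eq_abs, abs_of_pos hτ]
  calc τ⁻¹ * ‖3/2 - 2*Complex.exp (-w) + (Complex.exp (-w))^2/2 - w‖
      ≤ τ⁻¹ * (15 * ‖w‖ ^ 3) := by
        exact mul_le_mul_of_nonneg_left key (by positivity)
    _ = 15 * τ^2 * ‖z‖ ^ 3 := by
        rw [habsw]; field_simp
end

section
/- For every ε > 0 there exists θ_ε ∈ (π/2, π) such that for every θ ∈ (π/2, θ_ε), every time step τ > 0 and every z ∈ D(τ,θ), the value δ_τ(e^{−zτ}) lies in the sector Σ_{π/2+ε}, i.e. δ_τ(e^{−zτ}) ≠ 0 and |arg δ_τ(e^{−zτ})| < π/2 + ε, where δ_τ is the BDF2 generating symbol. -/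
open Complex Set

/-- If `Re f > -tan ε * |Im f|` with `0 < ε < π/2`, then `f ≠ 0` and `|arg f| < π/2 + ε`. -/
lemma argLemma (ε : ℝ) (hε0 : 0 < ε) (hε2 : ε < Real.pi / 2) {f : ℂ}
    (h : -(Real.tan ε * |f.im|) < f.re) : f ≠ 0 ∧ |f.arg| < Real.pi / 2 + ε := by
  have hf0 : f ≠ 0 := by
    intro h0
    rw [h0] at h
    simp at h
  have habs : 0 < ‖f‖ := norm_pos_iff.mpr hf0
  have hsin : 0 < Real.sin ε := Real.sin_pos_of_pos_of_lt_pi hε0 (by linarith [Real.pi_pos])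
  have hcos : 0 < Real.cos ε := Real.cos_pos_of_mem_Ioo ⟨by linarith, hε2⟩
  have key : -(Real.sin ε * ‖f‖) < f.re := by
    rcases le_or_gt 0 f.re with hre | hre
    · nlinarith
    · have htan : Real.tan ε = Real.sin ε / Real.cos ε := Real.tan_eq_sin_div_cos ε
      rw [htan] at h
      have h1 : Real.cos ε * (-f.re) < Real.sin ε * |f.im| := by
        rw [neg_lt, div_mul_eq_mul_div, lt_div_iff₀ hcos] at h
        nlinarith
      have h2 : (Real.cos ε * (-f.re)) ^ 2 < (Real.sin ε * |f.im|) ^ 2 := by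
        have hge : 0 ≤ Real.cos ε * (-f.re) := by nlinarith
        nlinarith
      have hsq : (‖f‖) ^ 2 = f.re ^ 2 + f.im ^ 2 := by
        rw [Complex.sq_norm, Complex.normSq_apply]; ring
      have him2 : |f.im| ^ 2 = f.im ^ 2 := sq_abs f.im
      have hpyth : Real.sin ε ^ 2 + Real.cos ε ^ 2 = 1 := Real.sin_sq_add_cos_sq ε
      nlinarith [sq_nonneg (Real.sin ε * ‖f‖ + f.re), mul_pos hsin habs]
  refine ⟨hf0, ?_⟩
  by_contra hcon
  push_neg at hcon
  have h1 : |f.arg| ≤ Real.pi := Complex.abs_arg_le_pi f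
  have h2 : Real.cos |f.arg| ≤ Real.cos (Real.pi / 2 + ε) :=
    Real.cos_le_cos_of_nonneg_of_le_pi (by positivity) h1 hcon
  rw [Real.cos_abs] at h2
  have h3 : Real.cos (Real.pi / 2 + ε) = -Real.sin ε := by
    rw [Real.cos_add, Real.cos_pi_div_two, Real.sin_pi_div_two]; ring
  rw [h3, Complex.cos_arg hf0, div_le_iff₀ habs] at h2
  nlinarith

/-- Case `Re w ≥ 0`: the real part of `3 - 4ξ + ξ²` is nonnegative and it is nonzero
unless `ξ = 1`. -/
lemma lemA (u v : ℝ) (hu : 0 ≤ u) (hnd : u ≠ 0 ∨ Real.cos v ≠ 1) :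
    0 ≤ 3 - 4 * (Real.exp (-u) * Real.cos v)
        + ((Real.exp (-u) * Real.cos v) ^ 2 - (Real.exp (-u) * Real.sin v) ^ 2) ∧
    ¬(3 - 4 * (Real.exp (-u) * Real.cos v)
        + ((Real.exp (-u) * Real.cos v) ^ 2 - (Real.exp (-u) * Real.sin v) ^ 2) = 0 ∧
      2 * (Real.exp (-u) * Real.sin v) * (2 - Real.exp (-u) * Real.cos v) = 0) := by
  set ρ := Real.exp (-u) with hρdef
  have hρ0 : 0 < ρ := Real.exp_pos _
  have hρ1 : ρ ≤ 1 := Real.exp_le_one_iff.mpr (by linarith)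
  have hpyth : Real.sin v ^ 2 + Real.cos v ^ 2 = 1 := Real.sin_sq_add_cos_sq v
  have hc1 : Real.cos v ≤ 1 := Real.cos_le_one v
  have hc2 : -1 ≤ Real.cos v := Real.neg_one_le_cos v
  constructor
  · nlinarith [sq_nonneg (1 - ρ * Real.cos v), sq_nonneg ρ]
  · rintro ⟨h1, h2⟩
    have hx2 : ρ * Real.cos v ≤ 1 := by nlinarith
    have hy : Real.sin v = 0 := by
      rcases mul_eq_zero.mp h2 with h | h
      · rcases mul_eq_zero.mp h with h' | h'
        · norm_num at h'
        · exact by nlinarith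
      · nlinarith
    have hx1 : ρ * Real.cos v = 1 := by nlinarith [sq_nonneg (1 - ρ * Real.cos v)]
    have hρeq : ρ = 1 := by nlinarith
    have hu0 : u = 0 := by
      have : -u = 0 := (Real.exp_eq_one_iff _).mp (hρdef ▸ hρeq)
      linarith
    have hcv : Real.cos v = 1 := by nlinarith
    rcases hnd with h | h
    · exact h hu0
    · exact h hcv

lemma auxT {a x y : ℝ} (ha : 0 ≤ a) (h2 : 0.63 * a ≤ x) (h1 : 0.8 ≤ y) (hx : 0 ≤ x) :
    a ≤ 2 * x * y := by nlinarith

lemma mul9 {η c V : ℝ} (h : η ≤ c / 9) (hV : 0 ≤ V) : 8 * (η * V) ≤ 8 / 9 * (c * V) := by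
  nlinarith

set_option maxHeartbeats 1000000 in
/-- Case `Re w < 0` with `|Re w| ≤ η |Im w|`, `|Im w| ≤ π`:
positivity of `Re f + c |Im f|` for `f = 3 - 4ξ + ξ²`, `ξ = e^{-w}`. -/
lemma coreB (c η u v : ℝ) (hc : 0 < c) (hη9 : η ≤ c / 9) (hη20 : η ≤ 1 / 20)
    (hu : u < 0) (huv : -u ≤ η * |v|) (hv : |v| ≤ Real.pi) :
    0 < (3 - 4 * (Real.exp (-u) * Real.cos v)
          + ((Real.exp (-u) * Real.cos v) ^ 2 - (Real.exp (-u) * Real.sin v) ^ 2))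
        + c * |2 * (Real.exp (-u) * Real.sin v) * (2 - Real.exp (-u) * Real.cos v)| := by
  set ρ := Real.exp (-u) with hρdef
  set s := Real.cos v with hsdef
  set t := Real.sin v with htdef
  have hpi : (3.14 : ℝ) < Real.pi := by linarith [Real.pi_gt_d6]
  have hpi2 : Real.pi < 3.15 := by linarith [Real.pi_lt_d2]
  have hρ0 : 0 < ρ := Real.exp_pos _
  have hηv : 0 < η * |v| := lt_of_lt_of_le (by linarith) huv
  have hη0 : 0 < η := by
    rcases le_or_gt η 0 with h | h
    · nlinarith [abs_nonneg v]
    · exact h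
  have hv0 : 0 < |v| := by nlinarith
  have husmall : -u ≤ 0.16 := by nlinarith
  have hexp_u : 1 + u ≤ Real.exp u := by linarith [Real.add_one_le_exp u]
  have hprod : ρ * Real.exp u = 1 := by
    rw [hρdef, ← Real.exp_add]; norm_num
  have hρ1 : 1 < ρ := by nlinarith [Real.add_one_le_exp (-u), Real.exp_pos (-u)]
  have hρub : ρ ≤ 1.2 := by nlinarith [Real.exp_pos u]
  have hd : ρ - 1 ≤ 1.2 * (η * |v|) := by nlinarith [Real.exp_pos u]
  have hpyth : t ^ 2 + s ^ 2 = 1 := Real.sin_sq_add_cos_sq v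
  have hs1 : s ≤ 1 := Real.cos_le_one v
  have hs2 : -1 ≤ s := Real.neg_one_le_cos v
  have ht1 : |t| ≤ 1 := Real.abs_sin_le_one v
  have h2x : ρ * s < 2 := by nlinarith
  have habs : |2 * (ρ * t) * (2 - ρ * s)| = 2 * (ρ * |t|) * (2 - ρ * s) := by
    rw [abs_mul, abs_mul, _root_.abs_of_nonneg (by norm_num : (0:ℝ) ≤ (2:ℝ)), abs_mul,
      _root_.abs_of_pos hρ0, _root_.abs_of_pos (by linarith : (0:ℝ) < 2 - ρ * s)]
  rw [habs]
  have h01 : (0:ℝ) ≤ ρ - 1 := by linarith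
  have hA : 2 * (1 - s) ^ 2 - 8 * (η * |v|) ≤ 3 - 4 * (ρ * s) + ((ρ * s) ^ 2 - (ρ * t) ^ 2) := by
    have ht2 : (ρ * t) ^ 2 = ρ ^ 2 * (1 - s ^ 2) := by nlinarith
    rw [ht2]
    nlinarith [mul_nonneg h01 (by linarith : (0:ℝ) ≤ 1 - s),
      mul_nonneg h01 (by linarith : (0:ℝ) ≤ 1 + s),
      mul_nonneg h01 (by linarith : (0:ℝ) ≤ 1.2 - ρ),
      mul_nonneg (mul_nonneg h01 h01) (by linarith : (0:ℝ) ≤ 2 + ρ),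
      mul_nonneg h01 (sq_nonneg s),
      mul_nonneg (mul_nonneg h01 (sq_nonneg s)) (by linarith : (0:ℝ) ≤ ρ + 1)]
  rcases le_or_gt |v| (Real.pi / 2) with hvc | hvc
  · have hj : 2 / Real.pi * |v| ≤ |t| := Real.mul_abs_le_abs_sin hvc
    have hj' : 0.63 * |v| ≤ |t| := by
      have h263 : (0.63 : ℝ) ≤ 2 / Real.pi := by
        rw [le_div_iff₀ (by linarith : (0:ℝ) < Real.pi)]; nlinarith
      calc 0.63 * |v| ≤ 2 / Real.pi * |v| := mul_le_mul_of_nonneg_right h263 (abs_nonneg v)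
        _ ≤ |t| := hj
    have h1 : (0.8 : ℝ) ≤ 2 - ρ * s := by nlinarith
    have h2 : 0.63 * |v| ≤ ρ * |t| :=
      le_trans hj' (le_mul_of_one_le_left (abs_nonneg t) hρ1.le)
    have h3 : |v| ≤ 2 * (ρ * |t|) * (2 - ρ * s) :=
      auxT (abs_nonneg v) h2 h1 (by positivity)
    have hB : c * |v| ≤ c * (2 * (ρ * |t|) * (2 - ρ * s)) :=
      mul_le_mul_of_nonneg_left h3 hc.le
    have hη' : 8 * (η * |v|) ≤ 8 / 9 * (c * |v|) := mul9 hη9 (abs_nonneg v)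
    have hA' : -(8 * (η * |v|)) ≤ 3 - 4 * (ρ * s) + ((ρ * s) ^ 2 - (ρ * t) ^ 2) := by
      nlinarith [sq_nonneg (1 - s)]
    have hcv : 0 < c * |v| := mul_pos hc hv0
    linarith
  · have hs0 : s ≤ 0 := by
      have := Real.cos_nonpos_of_pi_div_two_le_of_le (le_of_lt hvc)
        (by linarith : |v| ≤ Real.pi + Real.pi / 2)
      rwa [Real.cos_abs] at this
    have hAA : 2 - 8 * (η * |v|) ≤ 3 - 4 * (ρ * s) + ((ρ * s) ^ 2 - (ρ * t) ^ 2) := by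
      nlinarith
    have hsmall : 8 * (η * |v|) ≤ 8 * ((1 / 20) * 3.15) := by nlinarith
    have hT0 : 0 ≤ c * (2 * (ρ * |t|) * (2 - ρ * s)) := by
      apply mul_nonneg hc.le
      apply mul_nonneg (by positivity)
      linarith
    linarith

lemma sin_mono_upper {x y : ℝ} (hx : Real.pi / 2 ≤ x) (hxy : x ≤ y) (hy : y ≤ Real.pi) :
    Real.sin y ≤ Real.sin x := by
  have e1 : Real.sin x = Real.cos (x - Real.pi / 2) := by
    rw [show x - Real.pi / 2 = -(Real.pi / 2 - x) by ring, Real.cos_neg,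
      Real.cos_pi_div_two_sub]
  have e2 : Real.sin y = Real.cos (y - Real.pi / 2) := by
    rw [show y - Real.pi / 2 = -(Real.pi / 2 - y) by ring, Real.cos_neg,
      Real.cos_pi_div_two_sub]
  rw [e1, e2]
  exact Real.cos_le_cos_of_nonneg_of_le_pi (by linarith) (by linarith [Real.pi_pos])
    (by linarith)

set_option maxHeartbeats 2000000 in
theorem bdf2_symbol_sector :
    ∀ ε > (0 : ℝ), ∃ θε ∈ Ioo (Real.pi / 2) Real.pi, ∀ θ ∈ Ioo (Real.pi / 2) θε,
      ∀ τ : ℝ, 0 < τ → ∀ z ∈ Dset τ θ,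
        bdf2 τ (Complex.exp (-z * τ)) ≠ 0 ∧
        |(bdf2 τ (Complex.exp (-z * τ))).arg| < Real.pi / 2 + ε := by
  intro ε hε
  have hπ1 : (3.14 : ℝ) < Real.pi := by linarith [Real.pi_gt_d6]
  have hπ2 : Real.pi < 3.15 := by linarith [Real.pi_lt_d2]
  set ε' := min ε 1 with hε'def
  have hε'pos : 0 < ε' := lt_min hε one_pos
  have hε'le : ε' ≤ ε := min_le_left _ _
  have hε'1 : ε' ≤ 1 := min_le_right _ _
  have hε'lt : ε' < Real.pi / 2 := by linarith
  set c := Real.tan ε' with hcdef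
  have hc : 0 < c := Real.tan_pos_of_pos_of_lt_pi_div_two hε'pos hε'lt
  set η₀ := min (c / 9) (1 / 20 : ℝ) with hη₀def
  have hη₀pos : 0 < η₀ := lt_min (by positivity) (by norm_num)
  set a := Real.arctan η₀ with hadef
  have ha1 : 0 < a := by
    rw [hadef, ← Real.arctan_zero]; exact Real.arctan_strictMono hη₀pos
  have ha2 : a < Real.pi / 2 := Real.arctan_lt_pi_div_two η₀
  have hcosa : 0 < Real.cos a := Real.cos_arctan_pos η₀
  have htana : Real.sin a = η₀ * Real.cos a := by
    have h := Real.tan_arctan η₀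
    rw [Real.tan_eq_sin_div_cos] at h
    field_simp at h
    rw [hadef]
    linarith [h]
  refine ⟨Real.pi / 2 + a, ⟨by linarith, by linarith⟩, ?_⟩
  intro θ hθ τ hτ z hz
  obtain ⟨hθ1, hθ2⟩ := hθ
  have hθπ : θ < Real.pi := by linarith
  have hsθ : 0 < Real.sin θ := Real.sin_pos_of_pos_of_lt_pi (by linarith) hθπ
  -- the key angular bound: -cos θ ≤ η₀ sin θ
  have hcosθε : Real.cos (Real.pi / 2 + a) = -Real.sin a := by
    rw [Real.cos_add, Real.cos_pi_div_two, Real.sin_pi_div_two]; ring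
  have hsinθε : Real.sin (Real.pi / 2 + a) = Real.cos a := by
    rw [Real.sin_add, Real.cos_pi_div_two, Real.sin_pi_div_two]; ring
  have hcc : Real.cos (Real.pi / 2 + a) < Real.cos θ :=
    Real.cos_lt_cos_of_nonneg_of_le_pi (by linarith) (by linarith) hθ2
  have hss : Real.cos a ≤ Real.sin θ := by
    rw [← hsinθε]
    exact sin_mono_upper (by linarith) hθ2.le (by linarith)
  have hkey : -Real.cos θ ≤ η₀ * Real.sin θ := by
    rw [hcosθε] at hcc
    have h4 : η₀ * Real.cos a ≤ η₀ * Real.sin θ := mul_le_mul_of_nonneg_left hss hη₀pos.le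
    linarith
  obtain ⟨hz0, hD⟩ := hz
  set ξ := Complex.exp (-z * (τ:ℂ)) with hξdef
  set u := z.re * τ with hudef
  set v := z.im * τ with hvdef
  have hwre : (-z * (τ:ℂ)).re = -u := by
    simp [Complex.mul_re, hudef]
  have hwim : (-z * (τ:ℂ)).im = -v := by
    simp [Complex.mul_im, hvdef]
  have hξre : ξ.re = Real.exp (-u) * Real.cos v := by
    rw [hξdef, Complex.exp_re, hwre, hwim, Real.cos_neg]
  have hξim : ξ.im = -(Real.exp (-u) * Real.sin v) := by
    rw [hξdef, Complex.exp_im, hwre, hwim, Real.sin_neg]; ring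
  set f := 3 - 4 * ξ + ξ ^ 2 with hfdef
  have hfre : f.re = 3 - 4 * (Real.exp (-u) * Real.cos v)
      + ((Real.exp (-u) * Real.cos v) ^ 2 - (Real.exp (-u) * Real.sin v) ^ 2) := by
    rw [hfdef]
    simp only [Complex.add_re, Complex.sub_re, Complex.mul_re, pow_two,
      Complex.re_ofNat, Complex.im_ofNat, Complex.ofReal_re, Complex.ofReal_im]
    rw [hξre, hξim]
    ring
  have hfim : f.im = 2 * (Real.exp (-u) * Real.sin v) * (2 - Real.exp (-u) * Real.cos v) := by
    rw [hfdef]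
    simp only [Complex.add_im, Complex.sub_im, Complex.mul_im, Complex.mul_re, pow_two,
      Complex.re_ofNat, Complex.im_ofNat, Complex.ofReal_re, Complex.ofReal_im]
    rw [hξre, hξim]
    ring
  have hbdf : bdf2 τ ξ = ((1 / (2 * τ) : ℝ) : ℂ) * f := by
    rw [bdf2, hfdef]
    have hτ0 : (τ : ℂ) ≠ 0 := Complex.ofReal_ne_zero.mpr hτ.ne'
    push_cast
    field_simp
    ring
  have harg : (bdf2 τ ξ).arg = f.arg := by
    rw [hbdf]
    exact Complex.arg_real_mul f (by positivity)
  have hconc : f ≠ 0 ∧ |f.arg| < Real.pi / 2 + ε' → 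
      bdf2 τ ξ ≠ 0 ∧ |(bdf2 τ ξ).arg| < Real.pi / 2 + ε := by
    rintro ⟨h1, h2⟩
    constructor
    · rw [hbdf]
      exact mul_ne_zero (by
        simp only [ne_eq, Complex.ofReal_eq_zero]
        positivity) h1
    · rw [harg]; linarith
  rcases le_or_gt 0 z.re with hre | hre
  · -- right half plane: must be the disk case
    rcases hD with ⟨hargθ, -⟩ | ⟨habsz, -⟩
    · exfalso
      have := Complex.abs_arg_le_pi_div_two_iff.mpr hre
      rw [hargθ] at this
      linarith
    · have hu : 0 ≤ u := mul_nonneg hre hτ.le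
      have hvle : |v| ≤ 1 := by
        have h1 : |z.im| ≤ ‖z‖ := Complex.abs_im_le_norm z
        have : |v| = |z.im| * τ := by
          rw [hvdef, abs_mul, _root_.abs_of_pos hτ]
        rw [this]
        calc |z.im| * τ ≤ (1 / τ) * τ := by
              apply mul_le_mul_of_nonneg_right _ hτ.le
              exact le_trans h1 habsz
          _ = 1 := by field_simp
      have hnd : u ≠ 0 ∨ Real.cos v ≠ 1 := by
        by_contra hcon
        push_neg at hcon
        obtain ⟨hu0, hcv⟩ := hcon
        have hzre : z.re = 0 := by
          rcases mul_eq_zero.mp hu0 with h | h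
          · exact h
          · exact absurd h hτ.ne'
        have hv0 : v = 0 := by
          have hb := abs_le.mp hvle
          apply (Real.cos_eq_one_iff_of_lt_of_lt ?_ ?_).mp hcv
          · linarith [hb.1]
          · linarith [hb.2]
        have hzim : z.im = 0 := by
          rcases mul_eq_zero.mp hv0 with h | h
          · exact h
          · exact absurd h hτ.ne'
        exact hz0 (Complex.ext hzre hzim)
      obtain ⟨hA1, hA2⟩ := lemA u v hu hnd
      apply hconc
      have hfne : f ≠ 0 := by
        intro h0
        apply hA2
        constructor
        · rw [← hfre, h0, Complex.zero_re]
        · rw [← hfim, h0, Complex.zero_im]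
      refine ⟨hfne, ?_⟩
      have : |f.arg| ≤ Real.pi / 2 := Complex.abs_arg_le_pi_div_two_iff.mpr (by
        rw [hfre]; exact hA1)
      linarith
  · -- left half plane
    have hargz : Real.pi / 2 < |z.arg| := by
      by_contra hcon
      push_neg at hcon
      have := Complex.abs_arg_le_pi_div_two_iff.mp hcon
      linarith
    have hφθ : |z.arg| ≤ θ := by
      rcases hD with ⟨hargθ, -⟩ | ⟨-, h⟩
      · exact le_of_eq hargθ
      · exact h
    have hvπ : |v| ≤ Real.pi := by
      have hveq : |v| = |z.im| * τ := by rw [hvdef, abs_mul, _root_.abs_of_pos hτ]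
      rcases hD with ⟨-, him⟩ | ⟨habsz, -⟩
      · rw [hveq]
        calc |z.im| * τ ≤ (Real.pi / τ) * τ := mul_le_mul_of_nonneg_right him hτ.le
          _ = Real.pi := by field_simp
      · rw [hveq]
        have h1 : |z.im| ≤ ‖z‖ := Complex.abs_im_le_norm z
        calc |z.im| * τ ≤ (1 / τ) * τ :=
              mul_le_mul_of_nonneg_right (le_trans h1 habsz) hτ.le
          _ = 1 := by field_simp
          _ ≤ Real.pi := by linarith
    have hzabs : 0 < ‖z‖ := norm_pos_iff.mpr hz0
    have hargpi : z.arg ≤ Real.pi := Complex.arg_le_pi z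
    have hargnpi : -Real.pi < z.arg := Complex.neg_pi_lt_arg z
    have habs_arg : |z.arg| ≤ Real.pi := Complex.abs_arg_le_pi z
    -- |sin (arg z)| = sin |arg z|, and z.re, z.im in polar form
    have hcosz : z.re = ‖z‖ * Real.cos z.arg := by
      rw [Complex.cos_arg hz0]; field_simp
    have hsinz : z.im = ‖z‖ * Real.sin z.arg := by
      rw [Complex.sin_arg]; field_simp
    have hsinabs : |Real.sin z.arg| = Real.sin |z.arg| := by
      rcases le_or_gt 0 z.arg with h | h
      · rw [_root_.abs_of_nonneg h, _root_.abs_of_nonneg (Real.sin_nonneg_of_nonneg_of_le_pi h hargpi)]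
      · rw [_root_.abs_of_neg h, Real.sin_neg]
        exact _root_.abs_of_nonpos (Real.sin_nonpos_of_nonpos_of_neg_pi_le h.le hargnpi.le)
    -- monotonicity comparisons
    have hcos1 : Real.cos θ ≤ Real.cos |z.arg| :=
      Real.cos_le_cos_of_nonneg_of_le_pi (abs_nonneg _) (le_of_lt hθπ) hφθ
    have hsin1 : Real.sin θ ≤ Real.sin |z.arg| :=
      sin_mono_upper hargz.le hφθ hθπ.le
    have hcosabs : Real.cos |z.arg| = Real.cos z.arg := Real.cos_abs z.arg
    -- the main inequality: -z.re ≤ η₀ |z.im|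
    have hmain : -z.re ≤ η₀ * |z.im| := by
      have h1 : |z.im| = ‖z‖ * Real.sin |z.arg| := by
        rw [hsinz, abs_mul, _root_.abs_of_pos hzabs, hsinabs]
      have h2 : -z.re = ‖z‖ * (-Real.cos z.arg) := by rw [hcosz]; ring
      rw [h1, h2]
      have h3 : -Real.cos z.arg ≤ η₀ * Real.sin |z.arg| := by
        rw [← hcosabs]
        have h4 : η₀ * Real.sin θ ≤ η₀ * Real.sin |z.arg| :=
          mul_le_mul_of_nonneg_left hsin1 hη₀pos.le
        linarith
      calc ‖z‖ * -Real.cos z.arg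
          ≤ ‖z‖ * (η₀ * Real.sin |z.arg|) :=
            mul_le_mul_of_nonneg_left h3 hzabs.le
        _ = η₀ * (‖z‖ * Real.sin |z.arg|) := by ring
    have huneg : u < 0 := mul_neg_of_neg_of_pos hre hτ
    have huv : -u ≤ η₀ * |v| := by
      have hveq : |v| = |z.im| * τ := by rw [hvdef, abs_mul, _root_.abs_of_pos hτ]
      rw [hveq, hudef]
      calc -(z.re * τ) = (-z.re) * τ := by ring
        _ ≤ (η₀ * |z.im|) * τ := mul_le_mul_of_nonneg_right hmain hτ.le
        _ = η₀ * (|z.im| * τ) := by ring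
    have hcore := coreB c η₀ u v hc (min_le_left _ _) (min_le_right _ _) huneg huv hvπ
    apply hconc
    apply argLemma ε' hε'pos hε'lt
    rw [hfre, hfim]
    rw [← hcdef]
    linarith [hcore]
end

section
/- There exists θ₀ ∈ (π/2, π) such that for every θ ∈ (π/2, θ₀) there is a constant c > 0, independent of τ and z, with the property: for every time step τ > 0 and every z ∈ D(τ,θ) one has |ρ₁(e^{−zτ}) τ² − z^{−2}| ≤ c τ², where ρ₁(ξ) = ξ/(1−ξ)². -/
open Complex Set

/-- Closed form of the generating function `Σ_{n≥1} n ξⁿ`. -/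
noncomputable def rho1 (ξ : ℂ) : ℂ := ξ / (1 - ξ) ^ 2

namespace Rho1Aux

lemma sum_range_three (u : ℂ) :
    (∑ m ∈ Finset.range 3, u ^ m / m.factorial) = 1 + u + u ^ 2 / 2 := by
  simp [Finset.sum_range_succ, Nat.factorial]

lemma sum_range_two (u : ℂ) :
    (∑ m ∈ Finset.range 2, u ^ m / m.factorial) = 1 + u := by
  simp [Finset.sum_range_succ, Nat.factorial]

lemma exp_cubic_bound (u : ℂ) (hu : ‖u‖ ≤ 1) :
    ‖Complex.exp u - (1 + u + u ^ 2 / 2)‖ ≤ 2 / 9 * ‖u‖ ^ 3 := by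
  have h := Complex.exp_bound hu (n := 3) (by norm_num)
  rw [sum_range_three] at h
  refine h.trans (le_of_eq ?_)
  norm_num [Nat.factorial]
  ring

lemma exp_quadratic_bound (u : ℂ) (hu : ‖u‖ ≤ 1) :
    ‖Complex.exp u - (1 + u)‖ ≤ 3 / 4 * ‖u‖ ^ 2 := by
  have h := Complex.exp_bound hu (n := 2) (by norm_num)
  rw [sum_range_two] at h
  refine h.trans (le_of_eq ?_)
  norm_num [Nat.factorial]
  ring

lemma sinh_sub_self_small (u : ℂ) (hu : ‖u‖ ≤ 1) :
    ‖Complex.sinh u - u‖ ≤ ‖u‖ ^ 3 := by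
  have h1 := exp_cubic_bound u hu
  have h2 := exp_cubic_bound (-u) (by simpa using hu)
  have key : Complex.sinh u - u =
      ((Complex.exp u - (1 + u + u ^ 2 / 2)) -
        (Complex.exp (-u) - (1 + -u + (-u) ^ 2 / 2))) / 2 := by
    rw [Complex.sinh]
    ring
  rw [key]
  rw [norm_div]
  simp only [Complex.norm_two]
  have habs : ‖(Complex.exp u - (1 + u + u ^ 2 / 2)) -
      (Complex.exp (-u) - (1 + -u + (-u) ^ 2 / 2))‖ ≤
      2 / 9 * ‖u‖ ^ 3 + 2 / 9 * ‖u‖ ^ 3 := by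
    refine (norm_sub_le _ _).trans ?_
    have : ‖-u‖ = ‖u‖ := by simp
    rw [this] at h2
    linarith
  have h3 : (0:ℝ) ≤ ‖u‖ ^ 3 := by positivity
  rw [div_le_iff₀ (by norm_num : (0:ℝ) < 2)]
  linarith

lemma cosh_sub_one_small (u : ℂ) (hu : ‖u‖ ≤ 1) :
    ‖Complex.cosh u - 1‖ ≤ ‖u‖ ^ 2 := by
  have h1 := exp_quadratic_bound u hu
  have h2 := exp_quadratic_bound (-u) (by simpa using hu)
  have key : Complex.cosh u - 1 =
      ((Complex.exp u - (1 + u)) + (Complex.exp (-u) - (1 + -u))) / 2 := by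
    rw [Complex.cosh]
    ring
  rw [key, norm_div]
  simp only [Complex.norm_two]
  have habs : ‖(Complex.exp u - (1 + u)) + (Complex.exp (-u) - (1 + -u))‖ ≤
      3 / 4 * ‖u‖ ^ 2 + 3 / 4 * ‖u‖ ^ 2 := by
    refine (norm_add_le _ _).trans ?_
    have : ‖-u‖ = ‖u‖ := by simp
    rw [this] at h2
    linarith
  have h3 : (0:ℝ) ≤ ‖u‖ ^ 2 := by positivity
  rw [div_le_iff₀ (by norm_num : (0:ℝ) < 2)]
  linarith

lemma sinh_sub_self (v : ℂ) (hv : ‖v‖ ≤ 2) :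
    ‖Complex.sinh v - v‖ ≤ ‖v‖ ^ 3 := by
  set u := v / 2 with hu_def
  have huabs : ‖u‖ = ‖v‖ / 2 := by
    simp [hu_def, norm_div]
  have hu1 : ‖u‖ ≤ 1 := by rw [huabs]; linarith
  have hv2 : v = 2 * u := by rw [hu_def]; ring
  have hsinh : Complex.sinh v = 2 * Complex.sinh u * Complex.cosh u := by
    rw [hv2, Complex.sinh_two_mul]
  have key : Complex.sinh v - v =
      2 * (Complex.sinh u - u) * Complex.cosh u + 2 * u * (Complex.cosh u - 1) := by
    rw [hsinh, hv2]; ring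
  have hcosh : ‖Complex.cosh u‖ ≤ 2 := by
    have e1 : Complex.cosh u = (Complex.cosh u - 1) + 1 := by ring
    calc ‖Complex.cosh u‖
        = ‖(Complex.cosh u - 1) + 1‖ := by rw [← e1]
      _ ≤ ‖Complex.cosh u - 1‖ + ‖1‖ := norm_add_le _ _
      _ ≤ ‖u‖ ^ 2 + 1 := by
          have := cosh_sub_one_small u hu1
          simp only [norm_one]
          linarith
      _ ≤ 2 := by nlinarith [norm_nonneg u]
  have h1 := sinh_sub_self_small u hu1
  have h2 := cosh_sub_one_small u hu1
  calc ‖Complex.sinh v - v‖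
      ≤ ‖2 * (Complex.sinh u - u) * Complex.cosh u‖ +
        ‖2 * u * (Complex.cosh u - 1)‖ := by
        rw [key]; exact norm_add_le _ _
    _ ≤ 2 * (‖u‖ ^ 3) * 2 + 2 * ‖u‖ * ‖u‖ ^ 2 := by
        rw [norm_mul, norm_mul, norm_mul, norm_mul]
        simp only [Complex.norm_two]
        have hn1 : (0:ℝ) ≤ ‖Complex.sinh u - u‖ := norm_nonneg _
        have hn2 : (0:ℝ) ≤ ‖u‖ := norm_nonneg _
        have hn3 : (0:ℝ) ≤ ‖Complex.cosh u - 1‖ := norm_nonneg _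
        have hn4 : (0:ℝ) ≤ ‖Complex.cosh u‖ := norm_nonneg _
        nlinarith
    _ = 6 * ‖u‖ ^ 3 := by ring
    _ = 3 / 4 * ‖v‖ ^ 3 := by rw [huabs]; ring
    _ ≤ ‖v‖ ^ 3 := by
        have : (0:ℝ) ≤ ‖v‖ ^ 3 := by positivity
        linarith

lemma exp_32_le : Real.exp 3.2 ≤ 26 := by
  have h1 : Real.exp 1 ≤ 2.7182818286 := le_of_lt Real.exp_one_lt_d9
  have h02 : Real.exp 0.2 ≤ 1.25 := by
    have := Real.exp_bound_div_one_sub_of_interval (x := 0.2) (by norm_num) (by norm_num)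
    norm_num at this
    linarith
  have hsplit : Real.exp 3.2 = Real.exp 1 * Real.exp 1 * Real.exp 1 * Real.exp 0.2 := by
    rw [← Real.exp_add, ← Real.exp_add, ← Real.exp_add]
    norm_num
  have hp := Real.exp_pos 1
  have hp2 := Real.exp_pos 0.2
  have ha : Real.exp 1 * Real.exp 1 ≤ 2.7182818286 * 2.7182818286 := by nlinarith
  have hb : Real.exp 1 * Real.exp 1 * Real.exp 1 ≤
      2.7182818286 * 2.7182818286 * 2.7182818286 := by nlinarith
  have hc : Real.exp 1 * Real.exp 1 * Real.exp 1 * Real.exp 0.2 ≤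
      2.7182818286 * 2.7182818286 * 2.7182818286 * 1.25 := by nlinarith
  rw [hsplit]
  refine hc.trans ?_
  norm_num

lemma one_sub_cos_ge (y : ℝ) (hy : |y| ≤ Real.pi) :
    y ^ 2 * 2 ≤ (1 - Real.cos y) * Real.pi ^ 2 := by
  have hpi := Real.pi_pos
  have hs : |y| ≤ Real.pi * Real.sin (|y| / 2) := by
    have h := Real.mul_le_sin (x := |y| / 2) (by positivity) (by linarith [abs_nonneg y])
    have hid : 2 / Real.pi * (|y| / 2) * Real.pi = |y| := by field_simp
    nlinarith [mul_nonneg (sub_nonneg.mpr h) hpi.le]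
  have hcos : Real.cos y = 1 - 2 * Real.sin (|y| / 2) ^ 2 := by
    have e1 : (2 : ℝ) * (|y| / 2) = |y| := by ring
    have h2 := Real.cos_two_mul' (|y| / 2)
    rw [e1] at h2
    have h3 := Real.sin_sq_add_cos_sq (|y| / 2)
    rw [← Real.cos_abs y]
    linarith
  have hsq : |y| ^ 2 ≤ (Real.pi * Real.sin (|y| / 2)) ^ 2 :=
    pow_le_pow_left₀ (abs_nonneg y) hs 2
  rw [_root_.sq_abs] at hsq
  rw [hcos]
  nlinarith [hsq]

lemma lower_bound_real (x y : ℝ) (hx1 : -1 ≤ x) (hx2 : x ≤ 3.2) (hy : |y| ≤ Real.pi) :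
    (x ^ 2 + y ^ 2) / 65 ≤
      (1 - Real.exp (-x) * Real.cos y) ^ 2 + (Real.exp (-x) * Real.sin y) ^ 2 := by
  set E := Real.exp (-x) with hE
  have hEpos : 0 < E := Real.exp_pos _
  have hpyth := Real.sin_sq_add_cos_sq y
  have hidentity : (1 - E * Real.cos y) ^ 2 + (E * Real.sin y) ^ 2
      = (1 - E) ^ 2 + 2 * E * (1 - Real.cos y) := by
    linear_combination (E ^ 2) * hpyth
  rw [hidentity]
  have hmul : E * Real.exp x = 1 := by rw [hE, ← Real.exp_add]; norm_num
  have part1 : x ^ 2 / 65 ≤ (1 - E) ^ 2 := by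
    rcases le_or_gt x 0 with hx | hx
    · have h : 1 - x ≤ E := by
        have := Real.add_one_le_exp (-x)
        linarith
      nlinarith
    · have h1x : 1 + x ≤ Real.exp x := by linarith [Real.add_one_le_exp x]
      have hE1 : E * (1 + x) ≤ 1 := by
        nlinarith [mul_nonneg hEpos.le (sub_nonneg.mpr h1x)]
      have hE_le1 : E ≤ 1 := by nlinarith [mul_nonneg hEpos.le hx.le]
      have hstep : x ≤ (1 - E) * (1 + x) := by nlinarith
      have h42 : (1 - E) * (1 + x) ≤ (1 - E) * 4.2 :=
        mul_le_mul_of_nonneg_left (by linarith) (by linarith)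
      have hx42 : x ≤ 4.2 * (1 - E) := by nlinarith
      have hsq : x * x ≤ (4.2 * (1 - E)) * (4.2 * (1 - E)) :=
        mul_le_mul hx42 hx42 hx.le (by nlinarith)
      nlinarith
  have part2 : y ^ 2 / 65 ≤ 2 * E * (1 - Real.cos y) := by
    have hE26 : (1 : ℝ) / 26 ≤ E := by
      have h3 : Real.exp x ≤ 26 := le_trans (Real.exp_le_exp.mpr hx2) exp_32_le
      have hprod : 0 ≤ E * (26 - Real.exp x) := mul_nonneg hEpos.le (by linarith)
      nlinarith [hprod]
    have hcos' := one_sub_cos_ge y hy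
    have h7 : 0 ≤ 1 - Real.cos y := by
      have := Real.cos_le_one y; linarith
    have hpi : Real.pi < 3.15 := Real.pi_lt_d2
    have hpi0 : 0 < Real.pi := Real.pi_pos
    have hπsq : Real.pi ^ 2 ≤ 9.9225 := by nlinarith
    have h8 : 2 * y ^ 2 ≤ (1 - Real.cos y) * 9.9225 := by
      nlinarith [mul_nonneg h7 (sub_nonneg.mpr hπsq)]
    have h9 : 1 / 26 * (1 - Real.cos y) ≤ E * (1 - Real.cos y) :=
      mul_le_mul_of_nonneg_right hE26 h7
    linarith
  linarith

lemma one_sub_exp_lower (w : ℂ) (h1 : -1 ≤ w.re) (h2 : ‖w‖ ≤ 3.2)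
    (h3 : |w.im| ≤ Real.pi) :
    ‖w‖ / 9 ≤ ‖1 - Complex.exp (-w)‖ := by
  have hre32 : w.re ≤ 3.2 := le_trans (le_trans (le_abs_self _) (Complex.abs_re_le_norm w)) h2
  have key := lower_bound_real w.re w.im h1 hre32 h3
  have hre : (1 - Complex.exp (-w)).re = 1 - Real.exp (-w.re) * Real.cos w.im := by
    simp [Complex.exp_re, Real.cos_neg]
  have him : (1 - Complex.exp (-w)).im = Real.exp (-w.re) * Real.sin w.im := by
    simp [Complex.exp_im, Real.sin_neg]
  have hsq : ‖w‖ ^ 2 / 65 ≤ ‖1 - Complex.exp (-w)‖ ^ 2 := by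
    rw [Complex.sq_norm, Complex.sq_norm, Complex.normSq_apply, Complex.normSq_apply,
      hre, him]
    have habs : w.re * w.re + w.im * w.im = w.re ^ 2 + w.im ^ 2 := by ring
    rw [habs]
    nlinarith [key]
  have h9 : (‖w‖ / 9) ^ 2 ≤ ‖1 - Complex.exp (-w)‖ ^ 2 := by
    have : (‖w‖ / 9) ^ 2 = ‖w‖ ^ 2 / 81 := by ring
    rw [this]
    nlinarith [norm_nonneg w]
  have hn1 : (0:ℝ) ≤ ‖w‖ / 9 := by positivity
  have hn2 : (0:ℝ) ≤ ‖1 - Complex.exp (-w)‖ := norm_nonneg _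
  nlinarith

lemma core (w : ℂ) (hw : w ≠ 0) (h1 : -1 ≤ w.re) (h2 : ‖w‖ ≤ 3.2)
    (h3 : |w.im| ≤ Real.pi) :
    ‖Complex.exp (-w) / (1 - Complex.exp (-w)) ^ 2 - (w ^ 2)⁻¹‖ ≤ 1000 := by
  have hwpos : 0 < ‖w‖ := by
    simpa [norm_pos_iff] using hw
  set s := Complex.sinh (w / 2) with hs_def
  have hexp_half : Complex.exp (w / 2) * Complex.exp (-w) = Complex.exp (-(w / 2)) := by
    rw [← Complex.exp_add]; congr 1; ring
  have hs2 : 2 * s = Complex.exp (w / 2) * (1 - Complex.exp (-w)) := by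
    rw [hs_def, Complex.sinh, mul_sub, mul_one, hexp_half]
    ring
  have hlow := one_sub_exp_lower w h1 h2 h3
  have hexp_half_low : (1 : ℝ) / 2 ≤ ‖Complex.exp (w / 2)‖ := by
    rw [Complex.norm_exp]
    have : (w / 2).re = w.re / 2 := by simp
    rw [this]
    linarith [Real.add_one_le_exp (w.re / 2)]
  have h2s_low : ‖w‖ / 18 ≤ ‖2 * s‖ := by
    rw [hs2, norm_mul]
    calc ‖w‖ / 18 = (1 / 2) * (‖w‖ / 9) := by ring
      _ ≤ ‖Complex.exp (w / 2)‖ * ‖1 - Complex.exp (-w)‖ := by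
          apply mul_le_mul hexp_half_low hlow (by positivity) (norm_nonneg _)
  have h2s_ne : (2 * s) ≠ 0 := by
    intro h
    rw [h] at h2s_low
    simp at h2s_low
    nlinarith
  have hone_ne : (1 - Complex.exp (-w)) ≠ 0 := by
    intro h
    rw [h] at hlow
    simp at hlow
    nlinarith
  have hexp_sq : (Complex.exp (w / 2)) ^ 2 = Complex.exp w := by
    rw [sq, ← Complex.exp_add]; congr 1; ring
  have hA : Complex.exp (-w) / (1 - Complex.exp (-w)) ^ 2 = ((2 * s) ^ 2)⁻¹ := by
    rw [hs2, mul_pow, hexp_sq, mul_inv, ← Complex.exp_neg]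
    rw [div_eq_mul_inv]
  rw [hA]
  have hdiff : ((2 * s) ^ 2)⁻¹ - (w ^ 2)⁻¹ =
      ((w - 2 * s) * (w + 2 * s)) / ((2 * s) ^ 2 * w ^ 2) := by
    rw [inv_sub_inv (pow_ne_zero 2 h2s_ne) (pow_ne_zero 2 hw)]
    ring
  rw [hdiff, norm_div, norm_mul, norm_mul, norm_pow, norm_pow]
  -- numerator bounds
  have hhalf : ‖w / 2‖ ≤ 2 := by
    rw [norm_div]
    simp only [Complex.norm_two]
    linarith
  have hsinh := sinh_sub_self (w / 2) hhalf
  have hnum1 : ‖w - 2 * s‖ ≤ ‖w‖ ^ 3 / 4 := by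
    have hkey : w - 2 * s = -(2 * (Complex.sinh (w / 2) - w / 2)) := by
      rw [hs_def]; ring
    rw [hkey, norm_neg, norm_mul]
    simp only [Complex.norm_two]
    have habs_half : ‖w / 2‖ = ‖w‖ / 2 := by
      rw [norm_div]; simp
    rw [habs_half] at hsinh
    calc 2 * ‖Complex.sinh (w / 2) - w / 2‖ ≤ 2 * (‖w‖ / 2) ^ 3 := by
          linarith
      _ = ‖w‖ ^ 3 / 4 := by ring
  have hnum2 : ‖w + 2 * s‖ ≤ 5 * ‖w‖ := by
    have : w + 2 * s = 2 * w - (w - 2 * s) := by ring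
    rw [this]
    calc ‖2 * w - (w - 2 * s)‖
        ≤ ‖2 * w‖ + ‖w - 2 * s‖ := norm_sub_le _ _
      _ ≤ 2 * ‖w‖ + ‖w‖ ^ 3 / 4 := by
          rw [norm_mul]; simp only [Complex.norm_two]; linarith
      _ ≤ 5 * ‖w‖ := by
          have hn : (0:ℝ) ≤ ‖w‖ := norm_nonneg w
          have h10 : ‖w‖ ^ 2 ≤ 10.24 := by nlinarith
          have h11 : ‖w‖ ^ 2 * ‖w‖ ≤ 10.24 * ‖w‖ :=
            mul_le_mul_of_nonneg_right h10 hn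
          nlinarith [h11]
  have hden : ‖w‖ ^ 2 / 324 * ‖w‖ ^ 2 ≤
      ‖2 * s‖ ^ 2 * ‖w‖ ^ 2 := by
    have : (‖w‖ / 18) ^ 2 ≤ ‖2 * s‖ ^ 2 :=
      pow_le_pow_left₀ (by positivity) h2s_low 2
    nlinarith [sq_nonneg (‖w‖)]
  have hdenpos : (0:ℝ) < ‖w‖ ^ 2 / 324 * ‖w‖ ^ 2 := by positivity
  calc ‖w - 2 * s‖ * ‖w + 2 * s‖ /
        (‖2 * s‖ ^ 2 * ‖w‖ ^ 2)
      ≤ (‖w‖ ^ 3 / 4 * (5 * ‖w‖)) /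
        (‖w‖ ^ 2 / 324 * ‖w‖ ^ 2) := by
        apply div_le_div₀ (by positivity) ?_ hdenpos hden
        exact mul_le_mul hnum1 hnum2 (norm_nonneg _) (by positivity)
    _ = 405 := by field_simp; ring
    _ ≤ 1000 := by norm_num

end Rho1Aux

theorem rho1_consistency :
    ∃ θ₀ ∈ Ioo (Real.pi / 2) Real.pi, ∀ θ ∈ Ioo (Real.pi / 2) θ₀,
      ∃ c > (0 : ℝ),
        ∀ τ : ℝ, 0 < τ → ∀ z ∈ Dset τ θ,
          ‖rho1 (Complex.exp (-z * τ)) * (τ : ℂ) ^ 2 - z ^ (-2 : ℂ)‖ ≤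
            c * τ ^ 2 := by
  have hpi3 : 3 < Real.pi := Real.pi_gt_three
  have hpi315 : Real.pi < 3.15 := Real.pi_lt_d2
  refine ⟨Real.pi / 2 + 1 / 10, ⟨by linarith, by linarith⟩, ?_⟩
  intro θ hθ
  refine ⟨1000, by norm_num, ?_⟩
  intro τ hτ z hz
  obtain ⟨hz0, hcase⟩ := hz
  set w := z * (τ : ℂ) with hw_def
  have hτ0 : (τ : ℂ) ≠ 0 := by exact_mod_cast hτ.ne'
  have hw0 : w ≠ 0 := mul_ne_zero hz0 hτ0
  have hwim : w.im = z.im * τ := by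
    rw [hw_def]; simp [Complex.mul_im]
  have hwabs : ‖w‖ = ‖z‖ * τ := by
    rw [hw_def, norm_mul, Complex.norm_real, Real.norm_eq_abs, abs_of_pos hτ]
  -- establish region facts for w
  have hregion : -1 ≤ w.re ∧ ‖w‖ ≤ 3.2 ∧ |w.im| ≤ Real.pi := by
    rcases hcase with ⟨harg, him⟩ | ⟨habs, _⟩
    · -- ray case
      have hargw : w.arg = z.arg := Complex.arg_mul_real hτ z
      have hθpos : 0 ≤ θ := by linarith [hθ.1]
      have hargw_abs : |w.arg| = θ := by rw [hargw]; exact harg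
      have hwim_le : |w.im| ≤ Real.pi := by
        rw [hwim, abs_mul, abs_of_pos hτ]
        calc |z.im| * τ ≤ Real.pi / τ * τ := by
              apply mul_le_mul_of_nonneg_right him hτ.le
          _ = Real.pi := by field_simp
      have hθlt : θ < Real.pi / 2 + 1 / 10 := hθ.2
      have hθgt : Real.pi / 2 < θ := hθ.1
      have hsinθ : (0.99 : ℝ) ≤ Real.sin θ := by
        have h1 : Real.cos (θ - Real.pi / 2) = Real.sin θ := Real.cos_sub_pi_div_two θ
        have h4 := Real.one_sub_sq_div_two_le_cos (x := θ - Real.pi / 2)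
        nlinarith
      have hcos_le0 : Real.cos θ ≤ 0 :=
        Real.cos_nonpos_of_pi_div_two_le_of_le hθgt.le (by linarith)
      have hcos_ge : -(1 / 10 : ℝ) ≤ Real.cos θ := by
        have h1 : Real.sin (θ - Real.pi / 2) = -Real.cos θ := Real.sin_sub_pi_div_two θ
        have h2 : Real.sin (θ - Real.pi / 2) < θ - Real.pi / 2 :=
          Real.sin_lt (by linarith)
        linarith
      have hsin_arg : |Real.sin w.arg| = Real.sin θ := by
        rcases (abs_eq hθpos).mp hargw_abs with h | h
        · rw [h]; exact abs_of_nonneg (by linarith)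
        · rw [h, Real.sin_neg, abs_neg]; exact abs_of_nonneg (by linarith)
      have hcos_arg : Real.cos w.arg = Real.cos θ := by
        rcases (abs_eq hθpos).mp hargw_abs with h | h
        · rw [h]
        · rw [h, Real.cos_neg]
      have heq : ‖w‖ * Real.sin θ = |w.im| := by
        have h1 : ‖w‖ * Real.sin w.arg = w.im := Complex.norm_mul_sin_arg w
        have h2 : |‖w‖ * Real.sin w.arg| = |w.im| := by rw [h1]
        rw [abs_mul, _root_.abs_of_nonneg (norm_nonneg w), hsin_arg] at h2
        exact h2
      have habs_w : ‖w‖ ≤ 3.2 := by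
        nlinarith [norm_nonneg w, hwim_le, hpi315]
      have hre_w : -1 ≤ w.re := by
        have h1 : ‖w‖ * Real.cos w.arg = w.re := Complex.norm_mul_cos_arg w
        rw [hcos_arg] at h1
        nlinarith [norm_nonneg w]
      exact ⟨hre_w, habs_w, hwim_le⟩
    · -- disk case
      have h1 : ‖w‖ ≤ 1 := by
        rw [hwabs]
        calc ‖z‖ * τ ≤ 1 / τ * τ := by
              apply mul_le_mul_of_nonneg_right habs hτ.le
          _ = 1 := by field_simp
      refine ⟨?_, by linarith, ?_⟩
      · have := Complex.abs_re_le_norm w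
        have := neg_abs_le w.re
        linarith
      · have := Complex.abs_im_le_norm w
        linarith
  obtain ⟨hre, habs, him⟩ := hregion
  have hcore := Rho1Aux.core w hw0 hre habs him
  -- rewrite the goal
  have hz2 : z ^ (-2 : ℂ) = (z ^ 2)⁻¹ := by
    rw [show ((-2 : ℂ)) = ((-2 : ℤ) : ℂ) by norm_num, Complex.cpow_intCast]
    rw [show ((-2 : ℤ)) = -(2 : ℕ) by norm_num, zpow_neg, zpow_natCast]
  have hexp_arg : -z * (τ : ℂ) = -w := by rw [hw_def]; ring
  have halg : rho1 (Complex.exp (-z * τ)) * (τ : ℂ) ^ 2 - z ^ (-2 : ℂ) =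
      (τ : ℂ) ^ 2 * (Complex.exp (-w) / (1 - Complex.exp (-w)) ^ 2 - (w ^ 2)⁻¹) := by
    rw [hz2, hexp_arg, rho1]
    have hw2 : (w ^ 2)⁻¹ = (z ^ 2)⁻¹ * ((τ : ℂ) ^ 2)⁻¹ := by
      rw [hw_def]; rw [mul_pow, mul_inv]
    rw [hw2]
    field_simp
  rw [halg, norm_mul, norm_pow, Complex.norm_real, Real.norm_eq_abs, abs_of_pos hτ]
  calc τ ^ 2 * ‖Complex.exp (-w) / (1 - Complex.exp (-w)) ^ 2 - (w ^ 2)⁻¹‖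
      ≤ τ ^ 2 * 1000 := by
        apply mul_le_mul_of_nonneg_left hcore (by positivity)
    _ = 1000 * τ ^ 2 := by ring
end

section
/- Let γ ∈ (0, 1). There exists θ₀ ∈ (π/2, π) such that for every θ ∈ (π/2, θ₀) there is a constant c > 0, independent of τ and z, with the property: for every time step τ > 0 and every z ∈ D(τ,θ) one has |δ_τ(e^{−zτ})^{2−γ} ρ₁(e^{−zτ}) τ² − z^{−γ}| ≤ c τ² |z|^{2−γ}, where δ_τ is the BDF2 generating symbol and ρ₁(ξ) = ξ/(1−ξ)². -/
open Complex Set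

/-- cpow of a positive real multiple splits. -/
lemma ofReal_mul_cpow {r : ℝ} (hr : 0 < r) (x : ℂ) (s : ℂ) :
    ((r : ℂ) * x) ^ s = (r : ℂ) ^ s * x ^ s := by
  rcases eq_or_ne x 0 with rfl | hx
  · rcases eq_or_ne s 0 with rfl | hs
    · simp
    · simp [Complex.zero_cpow hs]
  · have hr' : (r : ℂ) ≠ 0 := Complex.ofReal_ne_zero.mpr hr.ne'
    rw [Complex.cpow_def_of_ne_zero (mul_ne_zero hr' hx),
      Complex.log_ofReal_mul hr hx, add_mul, Complex.exp_add,
      Complex.cpow_def_of_ne_zero hr', Complex.cpow_def_of_ne_zero hx]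
    congr 2
    rw [Complex.ofReal_log hr.le]

/-- cpow of product with arg condition. -/
lemma mul_cpow_of_arg {x y : ℂ} (hx : x ≠ 0) (hy : y ≠ 0)
    (h : x.arg + y.arg ∈ Ioc (-Real.pi) Real.pi) (s : ℂ) :
    (x * y) ^ s = x ^ s * y ^ s := by
  rw [Complex.cpow_def_of_ne_zero (mul_ne_zero hx hy), Complex.log_mul hx hy h, add_mul,
    Complex.exp_add, Complex.cpow_def_of_ne_zero hx, Complex.cpow_def_of_ne_zero hy]

/-- bound on |arg| for numbers near 1. -/
lemma abs_arg_le_pi_div_six {A : ℂ} (h : ‖A - 1‖ ≤ 1 / 12) :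
    |A.arg| ≤ Real.pi / 6 := by
  have hre : (11:ℝ)/12 ≤ A.re := by
    have := abs_le.1 (Complex.abs_re_le_norm (A - 1)) |>.1
    have h2 : |(A-1).re| ≤ 1/12 := le_trans (Complex.abs_re_le_norm _) h
    have := abs_le.1 h2
    simp only [Complex.sub_re, Complex.one_re] at this
    linarith [this.1]
  have him : |A.im| ≤ 1/12 := by
    have h2 : |(A-1).im| ≤ 1/12 := le_trans (Complex.abs_im_le_norm _) h
    simpa using h2
  have habs : (11:ℝ)/12 ≤ ‖A‖ := le_trans hre (Complex.re_le_norm A)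
  have habspos : (0:ℝ) < ‖A‖ := lt_of_lt_of_le (by norm_num) habs
  have harg : A.arg = Real.arcsin (A.im / ‖A‖) :=
    Complex.arg_of_re_nonneg (by linarith)
  have hratio : |A.im / ‖A‖| ≤ 1/2 := by
    rw [abs_div, abs_of_pos habspos]
    rw [div_le_iff₀ habspos]
    nlinarith
  rw [harg, abs_le]
  have hpi6 : Real.pi / 6 ∈ Ico (-(Real.pi/2)) (Real.pi/2) := by
    constructor <;> nlinarith [Real.pi_pos]
  constructor
  · rw [neg_le, ← Real.arcsin_neg]
    rw [Real.arcsin_le_iff_le_sin' hpi6, Real.sin_pi_div_six]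
    have := abs_le.1 hratio
    linarith [this.1]
  · rw [Real.arcsin_le_iff_le_sin' hpi6, Real.sin_pi_div_six]
    exact (abs_le.1 hratio).2

noncomputable def Fdel (w : ℂ) : ℂ := 3 / 2 - 2 * Complex.exp (-w) + (Complex.exp (-w)) ^ 2 / 2

noncomputable def Sh (w : ℂ) : ℂ := Complex.exp (w / 2) - Complex.exp (-(w / 2))

lemma exp3 {x : ℂ} (h : ‖x‖ ≤ 1) :
    ‖Complex.exp x - (1 + x + x ^ 2 / 2)‖ ≤ 2 / 9 * ‖x‖ ^ 3 := by
  have := Complex.exp_bound (x := x) h (n := 3) (by norm_num)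
  simp only [Finset.sum_range_succ, Finset.sum_range_zero, Nat.factorial] at this
  norm_num at this
  linarith

lemma expsq (w : ℂ) : Complex.exp (-w) ^ 2 = Complex.exp (-(2 * w)) := by
  rw [← Complex.exp_nat_mul]; congr 1; push_cast; ring

lemma exphalfsq (w : ℂ) : Complex.exp (w / 2) ^ 2 = Complex.exp w := by
  rw [← Complex.exp_nat_mul]; congr 1; push_cast; ring

lemma Fdel_sub {w : ℂ} (h : ‖w‖ ≤ 1 / 2) :
    ‖Fdel w - w‖ ≤ 4 / 3 * ‖w‖ ^ 3 := by
  have habs2 : ‖-(2 * w)‖ = 2 * ‖w‖ := by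
    simp [norm_neg, norm_mul]
  have h1 := exp3 (x := -w) (by simpa using h.trans (by norm_num))
  have h2 := exp3 (x := -(2 * w)) (by rw [habs2]; linarith)
  rw [habs2] at h2
  simp only [norm_neg] at h1
  have key : Fdel w - w =
      -2 * (Complex.exp (-w) - (1 + -w + (-w) ^ 2 / 2)) +
        (Complex.exp (-(2 * w)) - (1 + -(2 * w) + (-(2 * w)) ^ 2 / 2)) / 2 := by
    rw [Fdel, expsq w]; ring
  rw [key]
  calc ‖_‖ ≤ ‖-2 * (Complex.exp (-w) - (1 + -w + (-w) ^ 2 / 2))‖ +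
        ‖(Complex.exp (-(2 * w)) - (1 + -(2 * w) + (-(2 * w)) ^ 2 / 2)) / 2‖ :=
      norm_add_le _ _
    _ = 2 * ‖Complex.exp (-w) - (1 + -w + (-w) ^ 2 / 2)‖ +
        ‖Complex.exp (-(2 * w)) - (1 + -(2 * w) + (-(2 * w)) ^ 2 / 2)‖ / 2 := by
      rw [norm_mul, norm_div]; norm_num
    _ ≤ 2 * (2 / 9 * ‖w‖ ^ 3) + (2 / 9 * (2 * ‖w‖) ^ 3) / 2 := by
      refine add_le_add (by linarith) (by linarith)
    _ ≤ 4 / 3 * ‖w‖ ^ 3 := by ring_nf; nlinarith [norm_nonneg w]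

lemma Sh_sub {w : ℂ} (h : ‖w‖ ≤ 1 / 2) :
    ‖Sh w - w‖ ≤ ‖w‖ ^ 3 / 18 := by
  have habs2 : ‖-(w / 2)‖ = ‖w‖ / 2 := by
    simp [norm_neg, norm_div]
  have habs1 : ‖w / 2‖ = ‖w‖ / 2 := by simp [norm_div]
  have h1 := exp3 (x := w / 2) (by rw [habs1]; linarith)
  have h2 := exp3 (x := -(w / 2)) (by rw [habs2]; linarith)
  rw [habs1] at h1; rw [habs2] at h2
  have key : Sh w - w =
      (Complex.exp (w / 2) - (1 + w / 2 + (w / 2) ^ 2 / 2)) -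
        (Complex.exp (-(w / 2)) - (1 + -(w / 2) + (-(w / 2)) ^ 2 / 2)) := by
    rw [Sh]; ring
  rw [key]
  calc ‖_‖ ≤ ‖Complex.exp (w / 2) - (1 + w / 2 + (w / 2) ^ 2 / 2)‖ +
        ‖Complex.exp (-(w / 2)) - (1 + -(w / 2) + (-(w / 2)) ^ 2 / 2)‖ :=
      norm_sub_le _ _ -- guess name
    _ ≤ 2 / 9 * (‖w‖ / 2) ^ 3 + 2 / 9 * (‖w‖ / 2) ^ 3 := add_le_add h1 h2
    _ = ‖w‖ ^ 3 / 18 := by ring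



lemma Sh_factor (w : ℂ) : Sh w = Complex.exp (w / 2) * (1 - Complex.exp (-w)) := by
  rw [Sh, mul_sub, mul_one, ← Complex.exp_add]
  congr 2
  ring

lemma rho1_eq_Sh (w : ℂ) (hS : Sh w ≠ 0) :
    rho1 (Complex.exp (-w)) = ((Sh w) ^ 2)⁻¹ := by
  have h1 : (1 : ℂ) - Complex.exp (-w) ≠ 0 := by
    intro hc
    apply hS
    rw [Sh_factor, hc, mul_zero]
  rw [rho1, Sh_factor, mul_pow, exphalfsq, mul_inv, Complex.exp_neg, div_eq_mul_inv, mul_comm]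



set_option maxHeartbeats 1000000 in
lemma near_zero {γ : ℝ} (hγ : γ ∈ Ioo (0:ℝ) 1) {w : ℂ}
    (hw0 : w ≠ 0) (hsmall : ‖w‖ ≤ 1 / 4) (harg : |w.arg| < 3 * Real.pi / 4) :
    ‖Fdel w ^ ((2 - γ : ℝ) : ℂ) * rho1 (Complex.exp (-w)) - w ^ (-(γ : ℂ))‖ ≤
      23 * ‖w‖ ^ (2 - γ) := by
  obtain ⟨hγ0, hγ1⟩ := hγ
  set x := ‖w‖ with hxdef
  have hx : 0 < x := norm_pos_iff.mpr hw0
  have hx4 : x ≤ 1 / 4 := hsmall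
  have hx2 : x ≤ 1 / 2 := by linarith
  -- S bounds
  have hS' := Sh_sub hx2
  have hSlb : x / 2 ≤ ‖Sh w‖ := by
    have hw : w = Sh w + (w - Sh w) := by ring
    have h1 : x ≤ ‖Sh w‖ + ‖w - Sh w‖ := by
      calc x = ‖Sh w + (w - Sh w)‖ := by rw [← hw]
        _ ≤ _ := norm_add_le _ _
    have h2 : ‖w - Sh w‖ ≤ x ^ 3 / 18 := by
      rw [← norm_neg] at hS'; simpa using hS'
    have hx3 : x ^ 3 ≤ x := by
      nlinarith [mul_pos (mul_pos hx (show (0:ℝ) < 1 - x by linarith))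
        (show (0:ℝ) < 1 + x by linarith)]
    linarith
  have hSpos : 0 < ‖Sh w‖ := lt_of_lt_of_le (by positivity) hSlb
  have hSne : Sh w ≠ 0 := fun hc => by simp [hc] at hSpos
  -- B bound
  set B : ℂ := w ^ 2 * ((Sh w) ^ 2)⁻¹ with hBdef
  have hB : ‖B - 1‖ ≤ 2 / 3 * x ^ 2 := by
    have key : B - 1 = (w - Sh w) * (w + Sh w) * ((Sh w) ^ 2)⁻¹ := by
      rw [hBdef]
      field_simp
      ring
    rw [key, norm_mul, norm_mul, norm_inv, norm_pow]
    have hws : ‖w - Sh w‖ ≤ x ^ 3 / 18 := by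
      rw [← norm_neg] at hS'; simpa using hS'
    have hplus : ‖w + Sh w‖ ≤ 3 * x := by
      have := norm_add_le w (Sh w)
      have hSub : ‖Sh w‖ ≤ x + x ^ 3 / 18 := by
        have hw2 : Sh w = w + (Sh w - w) := by ring
        calc ‖Sh w‖ = ‖w + (Sh w - w)‖ := by rw [← hw2]
          _ ≤ x + ‖Sh w - w‖ := norm_add_le _ _
          _ ≤ x + x ^ 3 / 18 := by linarith
      have hx3 : x ^ 3 ≤ x := by
        nlinarith [mul_pos (mul_pos hx (show (0:ℝ) < 1 - x by linarith))
          (show (0:ℝ) < 1 + x by linarith)]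
      linarith
    have hinv : (‖Sh w‖ ^ 2)⁻¹ ≤ 4 / x ^ 2 := by
      have hsq : x ^ 2 / 4 ≤ ‖Sh w‖ ^ 2 := by nlinarith
      calc (‖Sh w‖ ^ 2)⁻¹ ≤ (x ^ 2 / 4)⁻¹ :=
            inv_anti₀ (by positivity) hsq
        _ = 4 / x ^ 2 := by rw [inv_div]
    calc ‖w - Sh w‖ * ‖w + Sh w‖ * (‖Sh w‖ ^ 2)⁻¹
        ≤ (x ^ 3 / 18) * (3 * x) * (4 / x ^ 2) := by
          apply mul_le_mul (mul_le_mul hws hplus (by positivity) (by positivity))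
            hinv (by positivity) (by positivity)
      _ = 2 / 3 * x ^ 2 := by
          field_simp
          ring
  -- A bound
  set A : ℂ := Fdel w / w with hAdef
  have hF := Fdel_sub hx2
  have hA : ‖A - 1‖ ≤ 4 / 3 * x ^ 2 := by
    have key : A - 1 = (Fdel w - w) * w⁻¹ := by
      rw [hAdef, sub_mul, mul_inv_cancel₀ hw0, div_eq_mul_inv]
    rw [key, norm_mul, norm_inv]
    calc ‖Fdel w - w‖ * (‖w‖)⁻¹ ≤ (4 / 3 * x ^ 3) * x⁻¹ := by
          apply mul_le_mul hF le_rfl (by positivity) (by positivity)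
      _ = 4 / 3 * x ^ 2 := by field_simp
  have hA12 : ‖A - 1‖ ≤ 1 / 12 := by nlinarith
  have hAne : A ≠ 0 := by
    intro hc
    rw [hc] at hA12
    simp at hA12
    norm_num at hA12
  have hargA : |A.arg| ≤ Real.pi / 6 := abs_arg_le_pi_div_six hA12
  have hFwA : Fdel w = w * A := by
    rw [hAdef]
    field_simp
  -- cpow split
  set s : ℂ := ((2 - γ : ℝ) : ℂ) with hsdef
  have hπ := Real.pi_pos
  have hsplit : Fdel w ^ s = w ^ s * A ^ s := by
    rw [hFwA]
    refine mul_cpow_of_arg hw0 hAne ⟨?_, ?_⟩ s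
    · have := abs_lt.1 harg
      have := abs_le.1 hargA
      linarith
    · have := abs_lt.1 harg
      have := abs_le.1 hargA
      linarith
  -- A^s - 1 bound
  have hAs : ‖A ^ s - 1‖ ≤ 11 * x ^ 2 := by
    have hu : ‖A - 1‖ ≤ 1 / 12 := by exact hA12
    have hlog : ‖Complex.log A‖ ≤ 2 * ‖A - 1‖ := by
      have h1 : ‖A - 1‖ < 1 := lt_of_le_of_lt hu (by norm_num)
      have := Complex.norm_log_one_add_sub_self_le (z := A - 1) h1
      have hA1 : (1 : ℂ) + (A - 1) = A := by ring
      rw [hA1] at this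
      have hq : ‖A - 1‖ ^ 2 * (1 - ‖A - 1‖)⁻¹ / 2 ≤ ‖A - 1‖ := by
        have h2 : (1 - ‖A - 1‖)⁻¹ ≤ 2 := by
          have hh : (1:ℝ) / 2 ≤ 1 - ‖A - 1‖ := by linarith
          calc (1 - ‖A - 1‖)⁻¹ ≤ ((1:ℝ) / 2)⁻¹ := inv_anti₀ (by norm_num) hh
            _ = 2 := by norm_num
        nlinarith [norm_nonneg (A - 1), sq_nonneg ‖A - 1‖]
      calc ‖Complex.log A‖ ≤ ‖Complex.log A - (A - 1)‖ + ‖A - 1‖ := by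
            calc ‖Complex.log A‖ = ‖Complex.log A - (A - 1) + (A - 1)‖ := by
                  rw [sub_add_cancel]
              _ ≤ _ := norm_add_le _ _
        _ ≤ 2 * ‖A - 1‖ := by linarith
    have hsnorm : ‖s‖ ≤ 2 := by
      rw [hsdef, Complex.norm_real, Real.norm_eq_abs]
      rw [abs_le]; constructor <;> linarith
    have hv : ‖Complex.log A * s‖ ≤ 4 * ‖A - 1‖ := by
      rw [norm_mul]
      calc ‖Complex.log A‖ * ‖s‖ ≤ (2 * ‖A - 1‖) * 2 := by
            apply mul_le_mul hlog hsnorm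
              (norm_nonneg s) (by positivity)
        _ = 4 * ‖A - 1‖ := by ring
    have hv1 : ‖Complex.log A * s‖ ≤ 1 := by
      calc ‖Complex.log A * s‖ ≤ 4 * ‖A - 1‖ := hv
        _ ≤ 4 * (1 / 12) := by nlinarith [norm_nonneg (A-1)]
        _ ≤ 1 := by norm_num
    have := Complex.norm_exp_sub_one_le hv1
    have hcpow : A ^ s = Complex.exp (Complex.log A * s) := Complex.cpow_def_of_ne_zero hAne s
    rw [hcpow]
    calc ‖Complex.exp (Complex.log A * s) - 1‖ ≤ 2 * ‖Complex.log A * s‖ := this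
      _ ≤ 2 * (4 * ‖A - 1‖) := by linarith
      _ ≤ 11 * x ^ 2 := by
          nlinarith
  -- main identity
  have hrho := rho1_eq_Sh w hSne
  have hpow2 : w ^ s = w ^ (-(γ : ℂ)) * w ^ (2 : ℕ) := by
    have hexp : s = -(γ : ℂ) + (2 : ℕ) := by rw [hsdef]; push_cast; ring
    rw [hexp, Complex.cpow_add _ _ hw0, Complex.cpow_natCast]
  have hmain : Fdel w ^ s * rho1 (Complex.exp (-w)) - w ^ (-(γ : ℂ)) =
      w ^ (-(γ : ℂ)) * (A ^ s * B - 1) := by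
    rw [hrho, hsplit, hpow2, hBdef]
    ring
  rw [hmain, norm_mul]
  -- final bounds
  have hBabs : ‖B‖ ≤ 2 := by
    have hB1 : B = (B - 1) + 1 := by ring
    calc ‖B‖ = ‖(B - 1) + 1‖ := by rw [← hB1]
      _ ≤ ‖B - 1‖ + 1 := by
          have := norm_add_le (B - 1) 1
          simpa using this
      _ ≤ 2 := by nlinarith
  have hfin : ‖A ^ s * B - 1‖ ≤ 23 * x ^ 2 := by
    have key : A ^ s * B - 1 = (A ^ s - 1) * B + (B - 1) := by ring
    rw [key]
    calc ‖(A ^ s - 1) * B + (B - 1)‖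
        ≤ ‖A ^ s - 1‖ * ‖B‖ + ‖B - 1‖ := by
          have := norm_add_le ((A ^ s - 1) * B) (B - 1)
          rw [norm_mul] at this
          exact this
      _ ≤ (11 * x ^ 2) * 2 + 2 / 3 * x ^ 2 := by
          refine add_le_add (mul_le_mul hAs hBabs (norm_nonneg _) (by positivity)) hB
      _ ≤ 23 * x ^ 2 := by nlinarith
  have habspow : ‖w ^ (-(γ : ℂ))‖ = x ^ (-γ) := by
    have : (-(γ : ℂ)) = ((-γ : ℝ) : ℂ) := by push_cast; ring
    rw [this, Complex.norm_cpow_real]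
  rw [habspow]
  calc x ^ (-γ) * ‖A ^ s * B - 1‖ ≤ x ^ (-γ) * (23 * x ^ 2) := by
        apply mul_le_mul_of_nonneg_left hfin (Real.rpow_nonneg hx.le _)
    _ = 23 * ‖w‖ ^ (2 - γ) := by
        rw [show (2 - γ) = -γ + 2 by ring, Real.rpow_add hx, Real.rpow_two]
        ring


lemma abs_arg_eq_arccos {w : ℂ} (hw : w ≠ 0) :
    |w.arg| = Real.arccos (w.re / ‖w‖) := by
  rw [← Complex.cos_arg hw, ← Real.cos_abs, Real.arccos_cos (abs_nonneg _)
    (Complex.abs_arg_le_pi w)]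

lemma exp_ne_one_on {θ : ℝ} (hθ1 : Real.pi / 2 < θ) {w : ℂ} (hw : w ∈ Dset 1 θ)
    (hbig : 1 / 4 ≤ ‖w‖) : Complex.exp (-w) ≠ 1 := by
  obtain ⟨hw0, hcase⟩ := hw
  rcases hcase with ⟨hargeq, _⟩ | ⟨habs, _⟩
  · -- ray part: re w < 0
    have hre : w.re < 0 := by
      by_contra hre
      push_neg at hre
      have := Complex.abs_arg_le_pi_div_two_iff.mpr hre
      rw [hargeq] at this
      linarith
    intro hc
    have : ‖Complex.exp (-w)‖ = 1 := by rw [hc]; simp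
    rw [Complex.norm_exp] at this
    simp only [Complex.neg_re] at this
    have : (1:ℝ) < Real.exp (-w.re) := Real.one_lt_exp_iff.mpr (by linarith)
    linarith [this, (by rw [Complex.norm_exp]; simp : ‖Complex.exp (-w)‖ = Real.exp (-w.re))]
  · -- disk part
    intro hc
    rw [Complex.exp_eq_one_iff] at hc
    obtain ⟨n, hn⟩ := hc
    have habsw : ‖w‖ = |(n : ℝ)| * (2 * Real.pi) := by
      have : w = -(n * (2 * Real.pi * Complex.I)) := by rw [← hn]; ring
      rw [this, norm_neg, norm_mul, norm_mul, norm_mul, Complex.norm_intCast,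
        Complex.norm_I, Complex.norm_real, Real.norm_eq_abs, Complex.norm_two]
      rw [abs_of_pos Real.pi_pos]
      ring
    rcases eq_or_ne n 0 with rfl | hn0
    · simp at habsw
      exact hw0 habsw
    · have h1 : (1:ℝ) ≤ |(n:ℝ)| := by
        rw [← Int.cast_abs]
        exact_mod_cast Int.one_le_abs hn0
      have : (2:ℝ) * Real.pi ≤ ‖w‖ := by
        rw [habsw]
        nlinarith [Real.pi_pos]
      simp only [one_div] at habs
      nlinarith [Real.pi_gt_three]

lemma isCompact_K {θ : ℝ} (hθ1 : Real.pi / 2 < θ) (hθ2 : θ < Real.pi) :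
    IsCompact {w : ℂ | w ∈ Dset 1 θ ∧ 1 / 4 ≤ ‖w‖} := by
  have hπ := Real.pi_pos
  have hθ0 : 0 < θ := by linarith
  have hsθ : 0 < Real.sin θ := Real.sin_pos_of_pos_of_lt_pi hθ0 hθ2
  set K := {w : ℂ | w ∈ Dset 1 θ ∧ 1 / 4 ≤ ‖w‖} with hK
  set S := {w : ℂ | 1 / 4 ≤ ‖w‖} with hS
  have hScl : IsClosed S := isClosed_le continuous_const continuous_norm
  set g : ℂ → ℝ := fun w => Real.arccos (w.re / ‖w‖) with hg
  have hgc : ContinuousOn g S := by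
    apply Real.continuous_arccos.comp_continuousOn
    apply ContinuousOn.div Complex.continuous_re.continuousOn
      continuous_norm.continuousOn
    intro w hw
    have : (0:ℝ) < ‖w‖ := lt_of_lt_of_le (by norm_num) hw
    exact ne_of_gt this
  have hKeq : K = (S ∩ g ⁻¹' {θ}) ∩ {w : ℂ | |w.im| ≤ Real.pi} ∪
      (S ∩ g ⁻¹' (Iic θ)) ∩ {w : ℂ | ‖w‖ ≤ 1} := by
    ext w
    simp only [hK, hS, hg, mem_setOf_eq, mem_union, mem_inter_iff, mem_preimage,
      mem_singleton_iff, mem_Iic, Dset, div_one]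
    constructor
    · rintro ⟨⟨hw0, hc | hc⟩, hbig⟩
      · exact Or.inl ⟨⟨hbig, by rw [← abs_arg_eq_arccos hw0]; exact hc.1⟩, hc.2⟩
      · exact Or.inr ⟨⟨hbig, by rw [← abs_arg_eq_arccos hw0]; exact hc.2⟩, hc.1⟩
    · rintro (⟨⟨hbig, hargeq⟩, him⟩ | ⟨⟨hbig, harg⟩, habs⟩)
      · have hw0 : w ≠ 0 := by
          intro hc; rw [hc] at hbig; simp at hbig; norm_num at hbig
        exact ⟨⟨hw0, Or.inl ⟨by rw [abs_arg_eq_arccos hw0]; exact hargeq, him⟩⟩, hbig⟩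
      · have hw0 : w ≠ 0 := by
          intro hc; rw [hc] at hbig; simp at hbig; norm_num at hbig
        exact ⟨⟨hw0, Or.inr ⟨habs, by rw [abs_arg_eq_arccos hw0]; exact harg⟩⟩, hbig⟩
  have hKcl : IsClosed K := by
    rw [hKeq]
    apply IsClosed.union
    · exact ((hgc.preimage_isClosed_of_isClosed hScl isClosed_singleton).inter
        (isClosed_le (continuous_abs.comp Complex.continuous_im) continuous_const))
    · exact ((hgc.preimage_isClosed_of_isClosed hScl isClosed_Iic).inter
        (isClosed_le continuous_norm continuous_const))
  have hsub : K ⊆ Metric.closedBall 0 (1 + Real.pi / Real.sin θ) := by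
    intro w hw
    obtain ⟨⟨hw0, hcase⟩, _⟩ := hw
    rw [Metric.mem_closedBall, Complex.dist_eq, sub_zero]
    have hdivpos : 0 < Real.pi / Real.sin θ := by positivity
    rcases hcase with ⟨hargeq, him⟩ | ⟨habs, _⟩
    · -- |im w| = abs w * sin θ
      have hsin : w.im = ‖w‖ * Real.sin w.arg := by
        rw [Complex.sin_arg]
        field_simp
      have habsarg : |Real.sin w.arg| = Real.sin θ := by
        rcases (abs_eq hθ0.le).mp hargeq with h | h
        · rw [h, abs_of_pos hsθ]
        · rw [h, Real.sin_neg, abs_neg, abs_of_pos hsθ]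
      have := him
      rw [div_one] at this
      have h2 : ‖w‖ * Real.sin θ ≤ Real.pi := by
        calc ‖w‖ * Real.sin θ = |w.im| := by
              rw [hsin, abs_mul, abs_norm, habsarg]
          _ ≤ Real.pi := this
      have : ‖w‖ ≤ Real.pi / Real.sin θ := by
        rw [le_div_iff₀ hsθ]; exact h2
      linarith
    · rw [div_one] at habs; linarith
  exact (isCompact_closedBall 0 _).of_isClosed_subset hKcl hsub

lemma compact_bound (γ : ℝ) (hγ : γ ∈ Ioo (0:ℝ) 1) {θ : ℝ} (hθ1 : Real.pi / 2 < θ)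
    (hθ2 : θ < Real.pi) :
    ∃ M > (0:ℝ), ∀ w ∈ Dset 1 θ, 1 / 4 ≤ ‖w‖ →
      ‖Fdel w ^ ((2 - γ : ℝ) : ℂ) * rho1 (Complex.exp (-w)) - w ^ (-(γ : ℂ))‖ ≤ M := by
  obtain ⟨hγ0, hγ1⟩ := hγ
  set K := {w : ℂ | w ∈ Dset 1 θ ∧ 1 / 4 ≤ ‖w‖} with hKdef
  have hKc : IsCompact K := isCompact_K hθ1 hθ2
  set φ : ℂ → ℝ := fun w =>
    ‖Fdel w‖ ^ (2 - γ) * ‖rho1 (Complex.exp (-w))‖ +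
      ‖w‖ ^ (-γ) with hφ
  have hφnonneg : ∀ w, 0 ≤ φ w := by
    intro w
    apply add_nonneg
    · apply mul_nonneg (Real.rpow_nonneg (norm_nonneg _) _) (norm_nonneg _)
    · exact Real.rpow_nonneg (norm_nonneg _) _
  have hφcont : ContinuousOn φ K := by
    have hFc : Continuous Fdel := by
      unfold Fdel
      continuity
    have habsF : ContinuousOn (fun w => ‖Fdel w‖) K :=
      (continuous_norm.comp hFc).continuousOn
    have h1 : ContinuousOn (fun w => ‖Fdel w‖ ^ (2 - γ)) K :=
      habsF.rpow_const (fun w _ => Or.inr (by linarith))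
    have hexpc : Continuous (fun w : ℂ => Complex.exp (-w)) := by continuity
    have hrhoc : ContinuousOn (fun w => rho1 (Complex.exp (-w))) K := by
      have : ∀ w ∈ K, ((1 : ℂ) - Complex.exp (-w)) ^ 2 ≠ 0 := by
        intro w hw
        exact pow_ne_zero _ (sub_ne_zero.mpr (Ne.symm (exp_ne_one_on hθ1 hw.1 hw.2)))
      unfold rho1
      exact ContinuousOn.div hexpc.continuousOn
        (((continuous_const.sub hexpc).pow 2).continuousOn) this
    have h2 : ContinuousOn (fun w => ‖rho1 (Complex.exp (-w))‖) K :=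
      continuous_norm.comp_continuousOn hrhoc
    have h3 : ContinuousOn (fun w => ‖w‖ ^ (-γ)) K := by
      apply ContinuousOn.rpow_const continuous_norm.continuousOn
      intro w hw
      exact Or.inl (ne_of_gt (lt_of_lt_of_le (by norm_num) hw.2))
    exact (h1.mul h2).add h3
  rcases K.eq_empty_or_nonempty with hemp | hne
  · refine ⟨1, by norm_num, fun w hw hbig => ?_⟩
    exfalso
    have : w ∈ K := ⟨hw, hbig⟩
    rw [hemp] at this
    exact this
  · obtain ⟨x0, hx0K, hmax⟩ := hKc.exists_isMaxOn hne hφcont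
    refine ⟨φ x0 + 1, by linarith [hφnonneg x0], fun w hw hbig => ?_⟩
    have hwK : w ∈ K := ⟨hw, hbig⟩
    have hφw : φ w ≤ φ x0 := hmax hwK
    have hLHS : ‖Fdel w ^ ((2 - γ : ℝ) : ℂ) * rho1 (Complex.exp (-w)) -
        w ^ (-(γ : ℂ))‖ ≤ φ w := by
      calc ‖_‖ ≤ ‖Fdel w ^ ((2 - γ : ℝ) : ℂ) * rho1 (Complex.exp (-w))‖ +
            ‖w ^ (-(γ : ℂ))‖ := norm_sub_le _ _
        _ = φ w := by
            rw [norm_mul, Complex.norm_cpow_real]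
            congr 1
            rw [show (-(γ:ℂ)) = ((-γ:ℝ):ℂ) by push_cast; ring, Complex.norm_cpow_real]
    linarith



lemma core (γ : ℝ) (hγ : γ ∈ Ioo (0:ℝ) 1) {θ : ℝ} (hθ1 : Real.pi / 2 < θ)
    (hθ2 : θ < 3 * Real.pi / 4) :
    ∃ c > (0:ℝ), ∀ w ∈ Dset 1 θ,
      ‖Fdel w ^ ((2 - γ : ℝ) : ℂ) * rho1 (Complex.exp (-w)) - w ^ (-(γ : ℂ))‖ ≤
        c * ‖w‖ ^ (2 - γ) := by
  have hπ := Real.pi_pos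
  have hθπ : θ < Real.pi := by linarith
  obtain ⟨M, hMpos, hM⟩ := compact_bound γ hγ hθ1 hθπ
  refine ⟨max 23 (16 * M), lt_of_lt_of_le (by norm_num) (le_max_left _ _), fun w hw => ?_⟩
  obtain ⟨hw0, hcase⟩ := hw
  have hargle : |w.arg| ≤ θ := by
    rcases hcase with ⟨h, _⟩ | ⟨_, h⟩
    · exact le_of_eq h
    · exact h
  have hrpow_nonneg : (0:ℝ) ≤ ‖w‖ ^ (2 - γ) :=
    Real.rpow_nonneg (norm_nonneg w) _
  rcases le_or_gt (‖w‖) (1/4) with hsmall | hbig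
  · have h23 := near_zero hγ hw0 hsmall (lt_of_le_of_lt hargle hθ2)
    calc ‖_‖ ≤ 23 * ‖w‖ ^ (2 - γ) := h23
      _ ≤ max 23 (16 * M) * ‖w‖ ^ (2 - γ) := by
          apply mul_le_mul_of_nonneg_right (le_max_left _ _) hrpow_nonneg
  · have hLHS := hM w ⟨hw0, hcase⟩ hbig.le
    have hx : (0:ℝ) < ‖w‖ := lt_trans (by norm_num) hbig
    have h16 : (1:ℝ)/16 ≤ ‖w‖ ^ (2 - γ) := by
      rcases le_or_gt (‖w‖) 1 with hle1 | hgt1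
      · have h1 : ‖w‖ ^ (2:ℝ) ≤ ‖w‖ ^ (2 - γ) :=
          Real.rpow_le_rpow_of_exponent_ge hx hle1 (by linarith [hγ.1])
        have h2 : (1:ℝ)/16 ≤ ‖w‖ ^ (2:ℝ) := by
          rw [Real.rpow_two]
          nlinarith
        linarith
      · have h1 : (1:ℝ) ≤ ‖w‖ ^ (2 - γ) := by
          apply Real.one_le_rpow hgt1.le (by linarith [hγ.2])
        linarith
    have hMle : M ≤ max 23 (16 * M) * ‖w‖ ^ (2 - γ) := by
      have : 16 * M ≤ max 23 (16 * M) := le_max_right _ _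
      nlinarith [hrpow_nonneg]
    linarith



theorem bdf2_rho1_fractional_consistency (γ : ℝ) (hγ : γ ∈ Ioo (0 : ℝ) 1) :
    ∃ θ₀ ∈ Ioo (Real.pi / 2) Real.pi, ∀ θ ∈ Ioo (Real.pi / 2) θ₀,
      ∃ c > (0 : ℝ),
        ∀ τ : ℝ, 0 < τ → ∀ z ∈ Dset τ θ,
          ‖(bdf2 τ (Complex.exp (-z * τ))) ^ (((2 - γ : ℝ)) : ℂ) *
              rho1 (Complex.exp (-z * τ)) * (τ : ℂ) ^ 2 - z ^ (-(γ : ℂ))‖ ≤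
            c * τ ^ 2 * ‖z‖ ^ (2 - γ) := by
  have hπ := Real.pi_pos
  refine ⟨3 * Real.pi / 4, ⟨by linarith, by linarith⟩, fun θ hθ => ?_⟩
  obtain ⟨hθ1, hθ2⟩ := hθ
  obtain ⟨c, hcpos, hc⟩ := core γ hγ hθ1 hθ2
  refine ⟨c, hcpos, fun τ hτ z hz => ?_⟩
  set w : ℂ := z * (τ : ℂ) with hwdef
  have hτC : (τ : ℂ) ≠ 0 := Complex.ofReal_ne_zero.mpr hτ.ne'
  obtain ⟨hz0, hzcase⟩ := hz
  have hw0 : w ≠ 0 := mul_ne_zero hz0 hτC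
  -- membership
  have hargw : w.arg = z.arg := Complex.arg_mul_real hτ z
  have himw : w.im = z.im * τ := by
    rw [hwdef]
    simp [Complex.mul_im]
  have habsw : ‖w‖ = ‖z‖ * τ := by
    rw [hwdef, norm_mul, Complex.norm_real, Real.norm_eq_abs, abs_of_pos hτ]
  have hwD : w ∈ Dset 1 θ := by
    refine ⟨hw0, ?_⟩
    rcases hzcase with ⟨h1, h2⟩ | ⟨h1, h2⟩
    · left
      refine ⟨by rw [hargw]; exact h1, ?_⟩
      rw [div_one, himw, abs_mul, abs_of_pos hτ]
      exact (le_div_iff₀ hτ).mp h2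
    · right
      refine ⟨?_, by rw [hargw]; exact h2⟩
      rw [div_one, habsw]
      exact (le_div_iff₀ hτ).mp h1
  have hbound := hc w hwD
  -- rewrite the expression
  have hexpeq : Complex.exp (-z * (τ:ℂ)) = Complex.exp (-w) := by
    rw [hwdef]; ring_nf
  have hbdf : bdf2 τ (Complex.exp (-z * τ)) = ((τ⁻¹ : ℝ) : ℂ) * Fdel w := by
    rw [bdf2, hexpeq, Fdel]
    push_cast
    ring
  have hτinv : (0:ℝ) < τ⁻¹ := by positivity
  have hsplit1 : (bdf2 τ (Complex.exp (-z * τ))) ^ (((2 - γ : ℝ)) : ℂ) =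
      ((τ⁻¹ ^ (2 - γ) : ℝ) : ℂ) * Fdel w ^ (((2 - γ : ℝ)) : ℂ) := by
    rw [hbdf, ofReal_mul_cpow hτinv, Complex.ofReal_cpow hτinv.le]
  have hzw : z = ((τ⁻¹ : ℝ) : ℂ) * w := by
    rw [hwdef]
    push_cast
    field_simp
  have hsplit2 : z ^ (-(γ : ℂ)) = ((τ⁻¹ ^ (-γ) : ℝ) : ℂ) * w ^ (-(γ : ℂ)) := by
    rw [hzw, ofReal_mul_cpow hτinv, show (-(γ:ℂ)) = ((-γ : ℝ) : ℂ) by push_cast; ring,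
      Complex.ofReal_cpow hτinv.le]
  -- real rpow identities
  have e1 : τ⁻¹ ^ (2 - γ) * τ ^ 2 = τ ^ γ := by
    rw [Real.inv_rpow hτ.le, ← Real.rpow_neg hτ.le, ← Real.rpow_natCast τ 2,
      ← Real.rpow_add hτ]
    norm_num
  have e2 : τ⁻¹ ^ (-γ) = τ ^ γ := by
    rw [Real.inv_rpow hτ.le, ← Real.rpow_neg hτ.le]
    norm_num
  -- main factorization
  have hfact : (bdf2 τ (Complex.exp (-z * τ))) ^ (((2 - γ : ℝ)) : ℂ) *
      rho1 (Complex.exp (-z * τ)) * (τ : ℂ) ^ 2 - z ^ (-(γ : ℂ)) =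
      ((τ ^ γ : ℝ) : ℂ) *
        (Fdel w ^ (((2 - γ : ℝ)) : ℂ) * rho1 (Complex.exp (-w)) - w ^ (-(γ : ℂ))) := by
    rw [hsplit1, hsplit2, hexpeq]
    have ee : ((τ⁻¹ ^ (2 - γ) : ℝ) : ℂ) * (τ:ℂ) ^ 2 = ((τ ^ γ : ℝ) : ℂ) := by
      rw [← e1]; push_cast; ring
    have e2c : ((τ⁻¹ ^ (-γ) : ℝ) : ℂ) = ((τ ^ γ : ℝ) : ℂ) := by rw [e2]
    linear_combination (rho1 (Complex.exp (-w)) * Fdel w ^ (((2 - γ : ℝ)) : ℂ)) * ee -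
      w ^ (-(γ : ℂ)) * e2c
  rw [hfact, norm_mul, Complex.norm_real, Real.norm_eq_abs, abs_of_pos (Real.rpow_pos_of_pos hτ γ)]
  have hrhs : c * τ ^ 2 * ‖z‖ ^ (2 - γ) =
      τ ^ γ * (c * ‖w‖ ^ (2 - γ)) := by
    have e3 : τ ^ γ * τ ^ (2 - γ) = τ ^ 2 := by
      rw [← Real.rpow_natCast τ 2, ← Real.rpow_add hτ]
      norm_num
    rw [habsw, Real.mul_rpow (norm_nonneg z) hτ.le, ← e3]
    ring
  rw [hrhs]
  exact mul_le_mul_of_nonneg_left hbound (Real.rpow_nonneg hτ.le γ)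
end
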